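/- arXiv:2408.09654 — 2 statements merged into one kernel-verified Lean document; each statement's English description precedes it below -/
import Mathlib

section
/- Define the microlocal multiplicity m_M of a loopless matroid M of rank d by m_M = (−1)^d Σ_{F ∈ L(M)} 2^{rk F} χ_{M^F}(1/2) P_{M_F}(1), where P denotes the matroid Kazhdan–Lusztig polynomial. Then m satisfies, for every loopless matroid M, the relation (−1)^{rk M} P_M(1) = Σ_{F ∈ L(M)} m_{M_F} (−1)^{rk F} χ_{M^F}(2). -/
open scoped Matroid

variable {α : Type*}

/-- The rank of a set in a matroid: the maximum size of an independent subset of the set. -/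
noncomputable def Matroid.rkSet (M : Matroid α) (S : Set α) : ℕ :=
  ⨆ I : {I : Set α // M.Indep I ∧ I ⊆ S}, I.1.ncard

/-- The rank of a matroid: the rank of its ground set. -/
noncomputable def Matroid.rank (M : Matroid α) : ℕ := M.rkSet M.E

/-- Deletion of a set from a matroid. -/
noncomputable def Matroid.del (M : Matroid α) (D : Set α) : Matroid α := M ↾ (M.E \ D)

/-- Contraction of a matroid by a set, defined via duality: `M / C = (M✶ \ C)✶`. -/
noncomputable def Matroid.con (M : Matroid α) (C : Set α) : Matroid α := (M✶.del C)✶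

/-- A matroid is loopless if every singleton of the ground set is independent. -/
def Matroid.IsLoopless (M : Matroid α) : Prop := ∀ e ∈ M.E, M.Indep {e}

/-- A matroid is simple if every (at most two-element) subset `{e, f}` of the ground set is
independent. -/
def Matroid.IsSimple (M : Matroid α) : Prop := ∀ e ∈ M.E, ∀ f ∈ M.E, M.Indep {e, f}

/-- The characteristic polynomial of a matroid, as a function of `t`, given by the
Whitney rank-generating-function formula `χ_M(t) = ∑_{S ⊆ E} (-1)^|S| t^(rk M - rk S)`
(which agrees with the Möbius-function definition for loopless matroids). -/
noncomputable def Matroid.charPoly (M : Matroid α) (t : ℚ) : ℚ :=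
  ∑ᶠ (S : Set α) (_ : S ⊆ M.E), (-1 : ℚ) ^ S.ncard * t ^ (M.rank - M.rkSet S)

/-- The beta invariant of a matroid, via Crapo's formula
`β(M) = (-1)^(rk M) ∑_{S ⊆ E} (-1)^|S| rk S`. -/
noncomputable def Matroid.betaInv (M : Matroid α) : ℚ :=
  (-1 : ℚ) ^ M.rank * ∑ᶠ (S : Set α) (_ : S ⊆ M.E), (-1 : ℚ) ^ S.ncard * (M.rkSet S : ℚ)

/-- The invariant `c_M = -2^(rk M) · χ_M(1/2)`. -/
noncomputable def Matroid.cInv (M : Matroid α) : ℚ :=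
  - 2 ^ M.rank * M.charPoly (1/2)

/-- `P` is a family of Kazhdan–Lusztig polynomials for the (finite loopless) matroids on `α`:
`P_∅ = 1`, `deg P_M < rk M / 2` for matroids of positive rank, and the defining functional
equation `(-t)^(rk M) P_M(1/t) - P_M(t) = ∑_{F > ∅} χ_{M^F}(t) P_{M_F}(t)` holds. -/
def IsKLFamily (P : Matroid α → Polynomial ℚ) : Prop :=
  P (Matroid.emptyOn α) = 1 ∧
  (∀ N : Matroid α, N.E.Finite → N.IsLoopless → 0 < N.rank →
      2 * (P N).natDegree < N.rank) ∧
  (∀ N : Matroid α, N.E.Finite → N.IsLoopless → ∀ t : ℚ, t ≠ 0 →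
      (-t) ^ N.rank * (P N).eval (1/t) - (P N).eval t =
        ∑ᶠ (F : Set α) (_ : N.IsFlat F ∧ F.Nonempty),
          (N ↾ F).charPoly t * (P (N.con F)).eval t)

/-- The microlocal multiplicity of a matroid:
`m_M = (-1)^(rk M) ∑_{F ∈ L(M)} 2^(rk F) χ_{M^F}(1/2) P_{M_F}(1)`. -/
noncomputable def microMult (P : Matroid α → Polynomial ℚ) (M : Matroid α) : ℚ :=
  (-1 : ℚ) ^ M.rank *
    ∑ᶠ (F : Set α) (_ : M.IsFlat F),
      2 ^ M.rkSet F * (M ↾ F).charPoly (1/2) * (P (M.con F)).eval 1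

section Aux
namespace MicroAux
open Matroid Set

variable {α : Type*} {M N : Matroid α} {X Y R I J C F G : Set α} {e : α} {t : ℚ}

/-! ### Basic rank facts -/

lemma ncard_le_of_indep (hfin : M.E.Finite) (hI : M.IsBasis' I X) (hJ : M.Indep J)
    (hJX : J ⊆ X) : J.ncard ≤ I.ncard := by
  by_contra hlt
  push_neg at hlt
  have hIfin : I.Finite := hfin.subset hI.indep.subset_ground
  have hJfin : J.Finite := hfin.subset hJ.subset_ground
  have hlt' : I.encard < J.encard := by
    rw [← hIfin.cast_ncard_eq, ← hJfin.cast_ncard_eq]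
    exact_mod_cast hlt
  obtain ⟨e, he, hins⟩ := hI.indep.augment hJ hlt'
  have := hI.eq_of_subset_indep hins (subset_insert _ _)
    (insert_subset (hJX he.1) hI.subset)
  exact he.2 (this ▸ mem_insert _ _)

lemma rkSet_eq_ncard (hfin : M.E.Finite) (hI : M.IsBasis' I X) : M.rkSet X = I.ncard := by
  have hub : ∀ J : {J : Set α // M.Indep J ∧ J ⊆ X}, J.1.ncard ≤ I.ncard :=
    fun J => ncard_le_of_indep hfin hI J.2.1 J.2.2
  refine le_antisymm (ciSup_le' hub) ?_
  exact le_ciSup_of_le ⟨I.ncard, by rintro x ⟨J, rfl⟩; exact hub J⟩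
    ⟨I, hI.indep, hI.subset⟩ le_rfl

lemma ncard_le_rkSet (hfin : M.E.Finite) (hJ : M.Indep J) (hJX : J ⊆ X) :
    J.ncard ≤ M.rkSet X := by
  obtain ⟨I, hI⟩ := M.exists_isBasis' X
  rw [rkSet_eq_ncard hfin hI]
  exact ncard_le_of_indep hfin hI hJ hJX

lemma rkSet_mono (hfin : M.E.Finite) (hXY : X ⊆ Y) : M.rkSet X ≤ M.rkSet Y := by
  obtain ⟨I, hI⟩ := M.exists_isBasis' X
  rw [rkSet_eq_ncard hfin hI]
  exact ncard_le_rkSet hfin hI.indep (hI.subset.trans hXY)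

lemma rkSet_indep (hfin : M.E.Finite) (hI : M.Indep I) : M.rkSet I = I.ncard :=
  rkSet_eq_ncard hfin hI.isBasis_self.isBasis'

lemma rkSet_le_rank (hfin : M.E.Finite) : M.rkSet X ≤ M.rank := by
  obtain ⟨I, hI⟩ := M.exists_isBasis' X
  rw [rkSet_eq_ncard hfin hI, Matroid.rank]
  exact ncard_le_rkSet hfin hI.indep hI.indep.subset_ground

lemma basis'_restrict_of_subset (hXR : X ⊆ R) : (M ↾ R).IsBasis' I X ↔ M.IsBasis' I X := by
  rw [Matroid.isBasis'_restrict_iff, Set.inter_eq_self_of_subset_left hXR]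
  exact ⟨fun h => h.1, fun h => ⟨h, h.subset.trans hXR⟩⟩

lemma rkSet_restrict (hfin : M.E.Finite) (hR : R ⊆ M.E) (hX : X ⊆ R) :
    (M ↾ R).rkSet X = M.rkSet X := by
  obtain ⟨I, hI⟩ := M.exists_isBasis' X
  rw [rkSet_eq_ncard hfin hI,
    rkSet_eq_ncard (by rw [Matroid.restrict_ground_eq]; exact hfin.subset hR)
      ((basis'_restrict_of_subset hX).2 hI)]

lemma rank_restrict (hfin : M.E.Finite) (hR : R ⊆ M.E) : (M ↾ R).rank = M.rkSet R := by
  rw [Matroid.rank, Matroid.restrict_ground_eq, rkSet_restrict hfin hR Subset.rfl]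

/-! ### Closure and rank -/

lemma rkSet_inter_ground (hfin : M.E.Finite) : M.rkSet (X ∩ M.E) = M.rkSet X := by
  obtain ⟨I, hI⟩ := M.exists_isBasis' X
  rw [rkSet_eq_ncard hfin hI, rkSet_eq_ncard hfin hI.isBasis_inter_ground.isBasis']

lemma mem_closure_iff_rkSet (hfin : M.E.Finite) (hX : X ⊆ M.E) (he : e ∈ M.E) :
    e ∈ M.closure X ↔ M.rkSet (insert e X) = M.rkSet X := by
  obtain ⟨I, hI⟩ := M.exists_isBasis' X
  have hclcl : M.closure I = M.closure X := hI.closure_eq_closure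
  constructor
  · intro hecl
    refine le_antisymm ?_ (rkSet_mono hfin (subset_insert _ _))
    have h1 : insert e X ⊆ M.closure X :=
      insert_subset hecl (M.subset_closure X hX)
    have h2 : M.rkSet (M.closure X) = I.ncard :=
      rkSet_eq_ncard hfin (hI.isBasis_closure_right.isBasis')
    calc M.rkSet (insert e X) ≤ M.rkSet (M.closure X) := rkSet_mono hfin h1
      _ = M.rkSet X := by rw [h2, rkSet_eq_ncard hfin hI]
  · intro hrk
    by_contra hecl
    have heI : e ∉ I := fun h => hecl (hclcl ▸ M.mem_closure_of_mem' h he)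
    have hecl' : e ∉ M.closure I := fun h => hecl (hclcl ▸ h)
    have hins : M.Indep (insert e I) :=
      (hI.indep.insert_indep_iff_of_notMem heI).2 ⟨he, hecl'⟩
    have hle : (insert e I).ncard ≤ M.rkSet (insert e X) :=
      ncard_le_rkSet hfin hins (insert_subset_insert hI.subset)
    rw [ncard_insert_of_notMem heI (hfin.subset hI.indep.subset_ground)] at hle
    rw [hrk, rkSet_eq_ncard hfin hI] at hle
    omega

lemma closure_flat' (M : Matroid α) (X : Set α) : M.IsFlat (M.closure X) := by
  rw [Matroid.closure_def]
  have hne : Nonempty {F : Set α // F ∈ {F | M.IsFlat F ∧ X ∩ M.E ⊆ F}} :=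
    ⟨⟨M.E, M.ground_isFlat, Set.inter_subset_right⟩⟩
  rw [Set.sInter_eq_iInter]
  exact Matroid.IsFlat.iInter fun F => F.2.1

lemma flat_iff' : M.IsFlat F ↔ M.closure F = F ∧ F ⊆ M.E :=
  ⟨fun h => ⟨h.closure, h.subset_ground⟩, fun ⟨h1, _⟩ => h1 ▸ closure_flat' M F⟩

lemma flat_empty (hl : M.IsLoopless) : M.IsFlat ∅ := by
  rw [flat_iff']
  refine ⟨subset_antisymm (fun e he => ?_) (empty_subset _), empty_subset _⟩
  have heE : e ∈ M.E := M.mem_ground_of_mem_closure he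
  have := ((M.empty_indep.insert_indep_iff_of_notMem (notMem_empty e)).1
    (by simpa using hl e heE)).2
  exact absurd he this

end MicroAux
end Aux
section Aux2
namespace MicroAux
open Matroid Set

variable {α : Type*} {M N : Matroid α} {X Y R I J C F G B W : Set α} {e : α} {t : ℚ}

lemma con_ground (M : Matroid α) (C : Set α) : (M.con C).E = M.E \ C := rfl

/-- Independence in a contraction, in terms of a fixed basis of the contracted set. -/
lemma con_indep_iff (hC : C ⊆ M.E) (hJ : M.IsBasis' J C) :
    (M.con C).Indep I ↔ M.Indep (I ∪ J) ∧ I ⊆ M.E \ C := by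
  have hJC : J ⊆ C := hJ.subset
  have hJCb : M.IsBasis J C := hJ.isBasis hC
  rw [Matroid.con, Matroid.del, Matroid.dual_indep_iff_exists']
  constructor
  · rintro ⟨hIE, B, hB, hdj⟩
    rw [Matroid.isBase_restrict_iff'] at hB
    have hIE' : I ⊆ M.E \ C := hIE
    -- K := M.E \ B is spanning, and minimally so over C
    set K := M.E \ B with hK
    have hBE : B ⊆ M.E := hB.indep.subset_ground
    have hKs : M.Spanning K := by
      rw [← Matroid.coindep_iff_compl_spanning]
      exact Matroid.coindep_def.2 hB.indep
    have hmin : ∀ x ∈ K, x ∉ C → ¬ M.Spanning (K \ {x}) := by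
      intro x hxK hxC hsp
      have hxE : x ∈ M.E := hxK.1
      have hKx : K \ {x} = M.E \ insert x B := by
        rw [hK, diff_diff]; rw [union_comm]; rw [Set.insert_eq]
      rw [hKx] at hsp
      have hco : M.Coindep (insert x B) := by
        rw [Matroid.coindep_iff_compl_spanning (insert_subset hxE hBE)]
        exact hsp
      have : B = insert x B := hB.eq_of_subset_indep (Matroid.coindep_def.1 hco)
        (subset_insert _ _) (insert_subset ⟨hxE, hxC⟩ hB.subset)
      exact hxK.2 (this ▸ mem_insert _ _)
    have hIK : I ⊆ K := fun x hx => ⟨(hIE' hx).1, fun hxB => hdj.ne_of_mem hx hxB rfl⟩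
    have hCK : C ⊆ K := fun x hx => ⟨hC hx, fun hxB => ((hB.subset hxB).2 hx)⟩
    refine ⟨?_, hIE'⟩
    -- Show I ∪ J independent
    obtain ⟨I₁, hI₁, hJI₁⟩ := hJ.indep.subset_isBasis'_of_subset (subset_union_right (s := I))
    have hIJE : I ∪ J ⊆ M.E := union_subset (hIE'.trans diff_subset) (hJC.trans hC)
    by_cases hIJ : I ∪ J ⊆ I₁
    · exact hI₁.indep.subset hIJ
    exfalso
    obtain ⟨y, hyIJ, hyI₁⟩ := not_subset.1 hIJ
    have hy : y ∈ I := by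
      rcases hyIJ with h | h
      · exact h
      · exact absurd (hJI₁ h) hyI₁
    have hycl : y ∈ M.closure I₁ := by
      have : I ∪ J ⊆ M.closure I₁ := (hI₁.isBasis hIJE).subset_closure
      exact this hyIJ
    have hI₁K : I₁ ⊆ K \ {y} := by
      refine subset_diff_singleton (hI₁.subset.trans (union_subset hIK (hJC.trans hCK))) hyI₁
    have hsp : M.Spanning (K \ {y}) := by
      rw [Matroid.spanning_iff_closure_eq (diff_subset.trans diff_subset)]
      have h1 : K ⊆ M.closure (K \ {y}) := by
        intro z hz
        rcases eq_or_ne z y with rfl | hne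
        · exact (M.closure_subset_closure hI₁K) hycl
        · exact M.subset_closure (K \ {y}) (diff_subset.trans diff_subset) ⟨hz, hne⟩
      have h2 : M.closure K ⊆ M.closure (K \ {y}) :=
        M.closure_subset_closure_of_subset_closure h1
      rw [(Matroid.spanning_iff_closure_eq diff_subset).1 hKs] at h2
      exact subset_antisymm (M.closure_subset_ground _) h2
    exact hmin y (hIK hy) (hIE' hy).2 hsp
  · rintro ⟨hIJind, hIE⟩
    obtain ⟨W, hW, hIJW⟩ := hIJind.exists_isBase_superset
    have hWE : W ⊆ M.E := hW.subset_ground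
    refine ⟨hIE, M.E \ (W ∪ C), ?_, ?_⟩
    · rw [Matroid.isBase_restrict_iff']
      have hind : M✶.Indep (M.E \ (W ∪ C)) := by
        rw [Matroid.dual_indep_iff_exists (diff_subset)]
        exact ⟨W, hW, disjoint_sdiff_left.mono_right subset_union_left⟩
      refine ⟨⟨hind, diff_subset_diff_right subset_union_right⟩, ?_⟩
      rintro B' ⟨hB'ind, hB'E⟩ hBB'
      intro x hxB'
      have hxE : x ∈ M.E := (hB'E hxB').1
      have hxC : x ∉ C := (hB'E hxB').2
      by_cases hxW : x ∈ W
      swap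
      · exact ⟨hxE, fun h => h.elim hxW hxC⟩
      exfalso
      -- x ∈ W and x in a coindependent set B' ⊇ B: contradiction
      have hsp : M.Spanning (M.E \ B') := by
        rw [← Matroid.coindep_iff_compl_spanning]
        exact Matroid.coindep_def.2 hB'ind
      have hsub : M.E \ B' ⊆ ((W \ {x}) ∪ C) := by
        intro z hz
        by_cases hzC : z ∈ C
        · exact Or.inr hzC
        by_cases hzW : z ∈ W
        · refine Or.inl ⟨hzW, ?_⟩
          intro hzx
          exact hz.2 (by rwa [hzx])
        · exact absurd (hBB' ⟨hz.1, fun h => h.elim hzW hzC⟩) hz.2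
      have hsp2 : M.Spanning ((W \ {x}) ∪ C) :=
        hsp.superset hsub (union_subset (diff_subset.trans hWE) hC)
      have hJW : J ⊆ W \ {x} := by
        intro z hz
        exact ⟨hIJW (Or.inr hz), fun hzx => hxC (hJC (Set.mem_singleton_iff.1 hzx ▸ hz))⟩
      have hCcl : C ⊆ M.closure (W \ {x}) :=
        hJCb.subset_closure.trans (M.closure_subset_closure hJW)
      have h1 : (W \ {x}) ∪ C ⊆ M.closure (W \ {x}) :=
        union_subset (M.subset_closure _ (diff_subset.trans hWE)) hCcl
      have h2 : M.closure ((W \ {x}) ∪ C) ⊆ M.closure (W \ {x}) :=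
        M.closure_subset_closure_of_subset_closure h1
      rw [(Matroid.spanning_iff_closure_eq (union_subset (diff_subset.trans hWE) hC)).1 hsp2] at h2
      exact hW.indep.notMem_closure_sdiff_of_mem hxW (h2 hxE)
    · have hIW : I ⊆ W := (subset_union_left).trans hIJW
      exact disjoint_sdiff_right.mono_left (hIW.trans subset_union_left)

end MicroAux
end Aux2
section Aux3
namespace MicroAux
open Matroid Set

variable {α : Type*} {M N : Matroid α} {X Y R I J C F G B W : Set α} {e : α} {t : ℚ}

lemma basis'_con_union (hfin : M.E.Finite) (hC : C ⊆ M.E) (hJ : M.IsBasis' J C)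
    (hX : X ⊆ M.E \ C) (hI : (M.con C).IsBasis' I X) : M.IsBasis' (I ∪ J) (X ∪ C) := by
  have hXC : Disjoint X C := disjoint_sdiff_left.mono_left hX
  have hIind := hI.indep
  rw [con_indep_iff hC hJ] at hIind
  obtain ⟨hIJind, hIEC⟩ := hIind
  refine ⟨⟨hIJind, union_subset_union hI.subset hJ.subset⟩, ?_⟩
  rintro L ⟨hLind, hLX⟩ hIJL
  have hLE : L ⊆ M.E := hLind.subset_ground
  have hJL : J ⊆ L := subset_union_right.trans hIJL
  have hIL : I ⊆ L := subset_union_left.trans hIJL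
  -- L ∩ C = J
  have hLC : L ∩ C = J := by
    refine (hJ.eq_of_subset_indep (hLind.inter_right C)
      (subset_inter hJL hJ.subset) inter_subset_right).symm
  -- L \ C = I
  have hLCI : L \ C = I := by
    refine (hI.eq_of_subset_indep ?_ (subset_diff.2 ⟨hIL, disjoint_sdiff_left.mono_left hIEC⟩)
      ?_).symm
    · rw [con_indep_iff hC hJ]
      refine ⟨hLind.subset (union_subset diff_subset hJL), diff_subset_diff_left hLE⟩
    · intro z hz
      rcases hLX hz.1 with h | h
      · exact h
      · exact absurd h hz.2
  intro z hz
  rcases em (z ∈ C) with h | h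
  · exact Or.inr (hLC ▸ ⟨hz, h⟩)
  · exact Or.inl (hLCI ▸ ⟨hz, h⟩)

lemma rkSet_con_add (hfin : M.E.Finite) (hC : C ⊆ M.E) (hX : X ⊆ M.E \ C) :
    (M.con C).rkSet X + M.rkSet C = M.rkSet (X ∪ C) := by
  obtain ⟨J, hJ⟩ := M.exists_isBasis' C
  obtain ⟨I, hI⟩ := (M.con C).exists_isBasis' X
  have hfin' : (M.con C).E.Finite := (hfin.diff)
  have hIJ : M.IsBasis' (I ∪ J) (X ∪ C) := basis'_con_union hfin hC hJ hX hI
  rw [rkSet_eq_ncard hfin' hI, rkSet_eq_ncard hfin hJ, rkSet_eq_ncard hfin hIJ]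
  have hIind := hI.indep
  rw [con_indep_iff hC hJ] at hIind
  have hdj : Disjoint I J :=
    (disjoint_sdiff_left.mono_left hIind.2).mono_right hJ.subset
  rw [ncard_union_eq hdj (hfin.subset (hIind.1.subset_ground.trans' subset_union_left))
    (hfin.subset (hJ.indep.subset_ground))]

lemma rkSet_con (hfin : M.E.Finite) (hC : C ⊆ M.E) (hX : X ⊆ M.E \ C) :
    (M.con C).rkSet X = M.rkSet (X ∪ C) - M.rkSet C := by
  have := rkSet_con_add hfin hC hX
  omega

lemma rank_con (hfin : M.E.Finite) (hC : C ⊆ M.E) :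
    (M.con C).rank = M.rank - M.rkSet C := by
  rw [Matroid.rank, con_ground, rkSet_con hfin hC Subset.rfl, diff_union_of_subset hC,
    Matroid.rank]

lemma con_closure (hfin : M.E.Finite) (hC : C ⊆ M.E) (hX : X ⊆ M.E \ C) :
    (M.con C).closure X = M.closure (X ∪ C) \ C := by
  have hfin' : (M.con C).E.Finite := hfin.diff
  have hXE : X ⊆ M.E := hX.trans diff_subset
  have hXCE : X ∪ C ⊆ M.E := union_subset hXE hC
  ext e
  constructor
  · intro he
    have heE : e ∈ (M.con C).E := Matroid.mem_ground_of_mem_closure he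
    rw [con_ground] at heE
    rw [mem_closure_iff_rkSet hfin' (by rwa [con_ground]) (by rwa [con_ground])] at he
    have h1 := rkSet_con_add hfin hC (insert_subset heE hX)
    have h2 := rkSet_con_add hfin hC hX
    rw [he] at h1
    have : M.rkSet (insert e X ∪ C) = M.rkSet (X ∪ C) := by omega
    rw [insert_union] at this
    refine ⟨(mem_closure_iff_rkSet hfin hXCE heE.1).2 this, heE.2⟩
  · rintro ⟨he, heC⟩
    have heE : e ∈ M.E := M.mem_ground_of_mem_closure he
    rw [mem_closure_iff_rkSet hfin hXCE heE, ← insert_union] at he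
    rw [mem_closure_iff_rkSet hfin' (by rwa [con_ground]) (by rw [con_ground]; exact ⟨heE, heC⟩)]
    have h1 := rkSet_con_add hfin hC (insert_subset ⟨heE, heC⟩ hX)
    have h2 := rkSet_con_add hfin hC hX
    omega

lemma con_flat_iff (hfin : M.E.Finite) (hCf : M.IsFlat C) :
    (M.con C).IsFlat X ↔ M.IsFlat (X ∪ C) ∧ X ⊆ M.E \ C := by
  have hC : C ⊆ M.E := hCf.subset_ground
  constructor
  · intro h
    have hXE : X ⊆ M.E \ C := h.subset_ground
    have hcl := (flat_iff'.1 h).1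
    rw [con_closure hfin hC hXE] at hcl
    have hXCE : X ∪ C ⊆ M.E := union_subset (hXE.trans diff_subset) hC
    refine ⟨flat_iff'.2 ⟨?_, hXCE⟩, hXE⟩
    refine subset_antisymm (fun y hy => ?_) (M.subset_closure _ hXCE)
    rcases em (y ∈ C) with h' | h'
    · exact Or.inr h'
    · exact Or.inl (hcl ▸ ⟨hy, h'⟩)
  · rintro ⟨hf, hXE⟩
    rw [flat_iff', con_closure hfin hC hXE, (flat_iff'.1 hf).1, con_ground, union_diff_right]
    exact ⟨sdiff_eq_left.2 (subset_diff.1 hXE).2, hXE⟩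

lemma con_con (M : Matroid α) (C D : Set α) : (M.con C).con D = M.con (C ∪ D) := by
  rw [Matroid.con, Matroid.con, Matroid.dual_dual, Matroid.con, Matroid.del, Matroid.del,
    Matroid.del]
  rw [Matroid.restrict_ground_eq]
  rw [Matroid.restrict_restrict_eq _ diff_subset]
  rw [Matroid.dual_ground, diff_diff]

lemma con_empty (M : Matroid α) : M.con ∅ = M := by
  rw [Matroid.con, Matroid.del, diff_empty, Matroid.restrict_ground_eq_self, Matroid.dual_dual]

lemma con_restrict (hfin : M.E.Finite) (hFG : F ⊆ G) (hG : G ⊆ M.E) :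
    (M.con F) ↾ (G \ F) = (M ↾ G).con F := by
  have hF : F ⊆ M.E := hFG.trans hG
  obtain ⟨J, hJ⟩ := M.exists_isBasis' F
  have hJ' : (M ↾ G).IsBasis' J F := (basis'_restrict_of_subset hFG).2 hJ
  refine Matroid.ext_indep ?_ (fun I hI => ?_)
  · rw [Matroid.restrict_ground_eq, con_ground, Matroid.restrict_ground_eq]
  · rw [Matroid.restrict_ground_eq] at hI
    rw [Matroid.restrict_indep_iff, con_indep_iff hF hJ,
      con_indep_iff (show F ⊆ (M ↾ G).E by rwa [Matroid.restrict_ground_eq]) hJ',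
      Matroid.restrict_indep_iff, Matroid.restrict_ground_eq]
    have hIG : I ⊆ G \ F := hI
    constructor
    · rintro ⟨⟨hind, _⟩, _⟩
      exact ⟨⟨hind, union_subset (hIG.trans (diff_subset.trans Subset.rfl))
        (hJ.subset.trans hFG)⟩, hIG⟩
    · rintro ⟨⟨hind, _⟩, _⟩
      refine ⟨⟨hind, subset_diff.2 ⟨hIG.trans (diff_subset.trans hG), ?_⟩⟩, hIG⟩
      exact disjoint_sdiff_left.mono_left hIG

end MicroAux
end Aux3
section Aux4
namespace MicroAux
open Matroid Set Finset

variable {α : Type*} {M N : Matroid α} {X Y R I J C F G B W : Set α} {e : α} {t : ℚ}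

/-- Convert a conditional `finsum` over sets into a `Finset` sum. -/
lemma finsum_cond_eq_sum (f : Set α → ℚ) (p : Set α → Prop) (fs : Finset (Set α))
    (h : ∀ S, p S ↔ S ∈ fs) :
    (∑ᶠ (S : Set α) (_ : p S), f S) = ∑ S ∈ fs, f S := by
  classical
  rw [← finsum_mem_coe_finset]
  exact finsum_congr fun S => by
    rw [finsum_eq_if, finsum_eq_if]
    exact if_congr ((h S).trans (Finset.mem_coe).symm) rfl rfl

lemma charPoly_eq_sum (M : Matroid α) (t : ℚ) (u : Finset α) (hu : ↑u = M.E) :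
    M.charPoly t = ∑ A ∈ u.powerset, (-1 : ℚ) ^ A.card * t ^ (M.rank - M.rkSet ↑A) := by
  classical
  rw [Matroid.charPoly,
    finsum_cond_eq_sum _ _ (u.powerset.image ((↑) : Finset α → Set α)) (fun S => ?_),
    Finset.sum_image (fun x _ y _ h => Finset.coe_injective h)]
  · exact Finset.sum_congr rfl fun A _ => by rw [Set.ncard_coe_finset]
  · constructor
    · intro hS
      have hSfin : S.Finite := (u.finite_toSet.subset (hu ▸ hS))
      refine Finset.mem_image.2 ⟨hSfin.toFinset, ?_, hSfin.coe_toFinset⟩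
      rw [Finset.mem_powerset, ← Finset.coe_subset, hSfin.coe_toFinset, hu]
      exact hS
    · intro hS
      obtain ⟨A, hA, rfl⟩ := Finset.mem_image.1 hS
      rw [← hu]
      exact_mod_cast Finset.mem_powerset.1 hA

/-- Adding an element `e` with `¬ M.Indep {e}` to a set does not change the rank. -/
lemma rkSet_insert_of_loop (hfin : M.E.Finite) (hl : ¬ M.Indep {e}) :
    M.rkSet (insert e X) = M.rkSet X := by
  rcases em (e ∈ X) with h | h
  · rw [insert_eq_self.2 h]
  obtain ⟨I, hI⟩ := M.exists_isBasis' X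
  have hI' : M.IsBasis' I (insert e X) := by
    refine ⟨⟨hI.indep, hI.subset.trans (subset_insert _ _)⟩, ?_⟩
    rintro L ⟨hLind, hLX⟩ hIL
    have heL : e ∉ L := fun heL => hl (hLind.subset (singleton_subset_iff.2 heL))
    have hLX' : L ⊆ X := fun z hz => by
      rcases hLX hz with h' | h'
      · exact absurd (h' ▸ hz) heL
      · exact h'
    exact hI.2 ⟨hLind, hLX'⟩ hIL
  rw [rkSet_eq_ncard hfin hI', rkSet_eq_ncard hfin hI]

/-- A matroid with a loop has identically vanishing characteristic polynomial. -/
lemma charPoly_eq_zero_of_loop (hfin : M.E.Finite) (he : e ∈ M.E) (hl : ¬ M.Indep {e})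
    (t : ℚ) : M.charPoly t = 0 := by
  classical
  have hu : ↑(hfin.toFinset) = M.E := hfin.coe_toFinset
  set u := hfin.toFinset with hudef
  have heu : e ∈ u := by rwa [← Finset.mem_coe, hu]
  have hins : insert e (u.erase e) = u := Finset.insert_erase heu
  rw [charPoly_eq_sum M t u hu, ← hins,
    Finset.sum_powerset_insert (Finset.notMem_erase e u)]
  rw [← Finset.sum_add_distrib]
  refine Finset.sum_eq_zero fun A hA => ?_
  have heA : e ∉ A := fun h => Finset.notMem_erase e u (Finset.mem_powerset.1 hA h)
  rw [Finset.card_insert_of_notMem heA, Finset.coe_insert,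
    rkSet_insert_of_loop hfin hl, pow_succ]
  ring

/-- Nested subset-pair sum swap. -/
lemma swap_sum [DecidableEq α] (R : Finset α) (h : Finset α → Finset α → ℚ) :
    ∑ A ∈ R.powerset, ∑ B ∈ A.powerset, h A B
      = ∑ B ∈ R.powerset, ∑ C ∈ (R \ B).powerset, h (B ∪ C) B := by
  rw [Finset.sum_sigma', Finset.sum_sigma']
  refine Finset.sum_nbij' (fun x => ⟨x.2, x.1 \ x.2⟩) (fun y => ⟨y.1 ∪ y.2, y.1⟩)
    ?_ ?_ ?_ ?_ ?_
  · rintro ⟨A, B⟩ hx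
    rw [Finset.mem_sigma, Finset.mem_powerset, Finset.mem_powerset] at hx
    rw [Finset.mem_sigma, Finset.mem_powerset, Finset.mem_powerset]
    exact ⟨hx.2.trans hx.1, Finset.sdiff_subset_sdiff hx.1 Finset.Subset.rfl⟩
  · rintro ⟨B, C⟩ hy
    rw [Finset.mem_sigma, Finset.mem_powerset, Finset.mem_powerset, Finset.subset_sdiff] at hy
    rw [Finset.mem_sigma, Finset.mem_powerset, Finset.mem_powerset]
    exact ⟨Finset.union_subset hy.1 hy.2.1, Finset.subset_union_left⟩
  · rintro ⟨A, B⟩ hx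
    rw [Finset.mem_sigma, Finset.mem_powerset, Finset.mem_powerset] at hx
    simp [Finset.union_sdiff_of_subset hx.2]
  · rintro ⟨B, C⟩ hy
    rw [Finset.mem_sigma, Finset.mem_powerset, Finset.mem_powerset, Finset.subset_sdiff] at hy
    simp [Finset.union_sdiff_cancel_left hy.2.2.symm]
  · rintro ⟨A, B⟩ hx
    rw [Finset.mem_sigma, Finset.mem_powerset, Finset.mem_powerset] at hx
    simp only
    rw [Finset.union_sdiff_of_subset hx.2]

lemma comm_sum [DecidableEq α] (R : Finset α) (k : Finset α → Finset α → ℚ) :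
    ∑ B ∈ R.powerset, ∑ C ∈ (R \ B).powerset, k B C
      = ∑ C ∈ R.powerset, ∑ B ∈ (R \ C).powerset, k B C := by
  refine Finset.sum_comm' fun B C => ?_
  rw [Finset.mem_powerset, Finset.mem_powerset, Finset.mem_powerset, Finset.mem_powerset,
    Finset.subset_sdiff, Finset.subset_sdiff]
  constructor
  · rintro ⟨h1, h2, h3⟩; exact ⟨⟨h1, h3.symm⟩, h2⟩
  · rintro ⟨⟨h1, h3⟩, h2⟩; exact ⟨h1, h2, h3.symm⟩

end MicroAux
end Aux4
section Aux5
namespace MicroAux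
open Matroid Set Finset

variable {α : Type*} {M N : Matroid α} {X Y R I J C F G B W : Set α} {e : α} {t : ℚ}

lemma pow_arith {a b c r : ℕ} (hab : a ≤ b) (hbc : b ≤ c) (hcr : c ≤ r) :
    (2:ℚ) ^ (b - a) * 2 ^ (r - b) * (1/2 : ℚ) ^ ((r - b) - (c - b)) = 2 ^ (c - a) := by
  have h2 : (r - b) - (c - b) = r - c := by omega
  have key : (2:ℚ) ^ (c - a) * 2 ^ (r - c) = 2 ^ (b - a) * 2 ^ (r - b) := by
    rw [← pow_add, ← pow_add]
    congr 1
    omega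
  rw [h2, div_pow, one_pow, mul_one_div, div_eq_iff (by positivity : (2:ℚ) ^ (r - c) ≠ 0)]
  exact key.symm

/-- The key convolution identity: `∑_{A ⊆ E} χ_{N|A}(2)·2^(rk N - rk A)·χ_{N/A}(1/2) = [E = ∅]`. -/
lemma sum_pow_neg_one [DecidableEq α] (u : Finset α) :
    (∑ A ∈ u.powerset, (-1:ℚ) ^ A.card) = if u = ∅ then 1 else 0 := by
  have h := Finset.sum_powerset_neg_one_pow_card (x := u)
  calc (∑ A ∈ u.powerset, (-1:ℚ) ^ A.card)
      = ((∑ A ∈ u.powerset, (-1:ℤ) ^ A.card : ℤ) : ℚ) := by push_cast; rfl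
    _ = _ := by rw [h]; split <;> simp

lemma conv_sum [DecidableEq α] (N : Matroid α) (hfin : N.E.Finite) (u : Finset α) (hu : ↑u = N.E) :
    (∑ A ∈ u.powerset,
      (N ↾ ↑A).charPoly 2 * 2 ^ (N.rank - N.rkSet ↑A) * (N.con ↑A).charPoly (1/2))
    = if u = ∅ then 1 else 0 := by
  classical
  -- Step 1: expand each term as a double sum
  have step1 : ∀ A ∈ u.powerset,
      (N ↾ ↑A).charPoly 2 * 2 ^ (N.rank - N.rkSet ↑A) * (N.con ↑A).charPoly (1/2)
      = ∑ B₁ ∈ A.powerset, ∑ B₂ ∈ (u \ A).powerset,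
          (-1:ℚ) ^ (B₁.card + B₂.card) * 2 ^ (N.rkSet (↑B₂ ∪ ↑A) - N.rkSet ↑B₁) := by
    intro A hA
    rw [Finset.mem_powerset] at hA
    have hAE : (A : Set α) ⊆ N.E := hu ▸ Finset.coe_subset.2 hA
    have hres : (N ↾ (A:Set α)).charPoly 2
        = ∑ B₁ ∈ A.powerset, (-1:ℚ) ^ B₁.card * 2 ^ (N.rkSet ↑A - N.rkSet ↑B₁) := by
      rw [charPoly_eq_sum (N ↾ (A:Set α)) 2 A (by rw [Matroid.restrict_ground_eq])]
      refine Finset.sum_congr rfl fun B₁ hB₁ => ?_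
      rw [Finset.mem_powerset] at hB₁
      rw [rank_restrict hfin hAE,
        rkSet_restrict hfin hAE (Finset.coe_subset.2 hB₁)]
    have hconA : (↑(u \ A) : Set α) = N.E \ ↑A := by rw [Finset.coe_sdiff, hu]
    have hcon : (N.con (A:Set α)).charPoly (1/2)
        = ∑ B₂ ∈ (u \ A).powerset, (-1:ℚ) ^ B₂.card *
            (1/2:ℚ) ^ ((N.rank - N.rkSet ↑A) - (N.rkSet (↑B₂ ∪ ↑A) - N.rkSet ↑A)) := by
      rw [charPoly_eq_sum (N.con (A:Set α)) (1/2) (u \ A) (by rw [hconA, con_ground])]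
      refine Finset.sum_congr rfl fun B₂ hB₂ => ?_
      rw [Finset.mem_powerset] at hB₂
      have hB₂E : (B₂ : Set α) ⊆ N.E \ ↑A := hconA ▸ Finset.coe_subset.2 hB₂
      rw [rank_con hfin hAE, rkSet_con hfin hAE hB₂E]
    rw [hres, hcon, Finset.sum_mul, Finset.sum_mul]
    refine Finset.sum_congr rfl fun B₁ hB₁ => ?_
    rw [Finset.mul_sum]
    refine Finset.sum_congr rfl fun B₂ hB₂ => ?_
    rw [Finset.mem_powerset] at hB₁ hB₂
    have hab : N.rkSet ↑B₁ ≤ N.rkSet ↑A := rkSet_mono hfin (Finset.coe_subset.2 hB₁)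
    have hbc : N.rkSet ↑A ≤ N.rkSet (↑B₂ ∪ ↑A) := rkSet_mono hfin subset_union_right
    have hcr : N.rkSet (↑B₂ ∪ ↑A) ≤ N.rank := rkSet_le_rank hfin
    rw [pow_add]
    have := pow_arith hab hbc hcr
    calc (-1:ℚ) ^ B₁.card * 2 ^ (N.rkSet ↑A - N.rkSet ↑B₁) * 2 ^ (N.rank - N.rkSet ↑A) *
          ((-1:ℚ) ^ B₂.card *
            (1/2:ℚ) ^ ((N.rank - N.rkSet ↑A) - (N.rkSet (↑B₂ ∪ ↑A) - N.rkSet ↑A)))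
        = ((-1:ℚ) ^ B₁.card * (-1:ℚ) ^ B₂.card) *
          (2 ^ (N.rkSet ↑A - N.rkSet ↑B₁) * 2 ^ (N.rank - N.rkSet ↑A) *
            (1/2:ℚ) ^ ((N.rank - N.rkSet ↑A) - (N.rkSet (↑B₂ ∪ ↑A) - N.rkSet ↑A))) := by ring
      _ = (-1:ℚ) ^ B₁.card * (-1:ℚ) ^ B₂.card * 2 ^ (N.rkSet (↑B₂ ∪ ↑A) - N.rkSet ↑B₁) := by
          rw [this]
      _ = _ := by ring
  rw [Finset.sum_congr rfl step1]
  -- Step 2: swap the (A, B₁) nesting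
  rw [swap_sum u (fun A B₁ => ∑ B₂ ∈ (u \ A).powerset,
        (-1:ℚ) ^ (B₁.card + B₂.card) * 2 ^ (N.rkSet (↑B₂ ∪ ↑A) - N.rkSet ↑B₁))]
  -- Step 3: for each B₁, massage the inner double sum
  have step3 : ∀ B₁ ∈ u.powerset,
      (∑ C ∈ (u \ B₁).powerset, ∑ B₂ ∈ (u \ (B₁ ∪ C)).powerset,
        (-1:ℚ) ^ (B₁.card + B₂.card) * 2 ^ (N.rkSet (↑B₂ ∪ ↑(B₁ ∪ C)) - N.rkSet ↑B₁))
      = (-1:ℚ) ^ B₁.card := by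
    intro B₁ hB₁
    have hsd : ∀ C : Finset α, u \ (B₁ ∪ C) = (u \ B₁) \ C := fun C => by
      exact (sdiff_sdiff u B₁ C).symm
    calc (∑ C ∈ (u \ B₁).powerset, ∑ B₂ ∈ (u \ (B₁ ∪ C)).powerset,
            (-1:ℚ) ^ (B₁.card + B₂.card) * 2 ^ (N.rkSet (↑B₂ ∪ ↑(B₁ ∪ C)) - N.rkSet ↑B₁))
        = ∑ C ∈ (u \ B₁).powerset, ∑ B₂ ∈ ((u \ B₁) \ C).powerset,
            (-1:ℚ) ^ (B₁.card + B₂.card) * 2 ^ (N.rkSet (↑B₁ ∪ ↑(B₂ ∪ C)) - N.rkSet ↑B₁) := by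
          refine Finset.sum_congr rfl fun C hC => ?_
          rw [hsd C]
          refine Finset.sum_congr rfl fun B₂ hB₂ => ?_
          congr 2
          rw [Finset.coe_union, Finset.coe_union, Set.union_left_comm]
      _ = ∑ B₂ ∈ (u \ B₁).powerset, ∑ C ∈ ((u \ B₁) \ B₂).powerset,
            (-1:ℚ) ^ (B₁.card + B₂.card) * 2 ^ (N.rkSet (↑B₁ ∪ ↑(B₂ ∪ C)) - N.rkSet ↑B₁) := by
          rw [comm_sum (u \ B₁) (fun C B₂ =>
            (-1:ℚ) ^ (B₁.card + B₂.card) * 2 ^ (N.rkSet (↑B₁ ∪ ↑(B₂ ∪ C)) - N.rkSet ↑B₁))]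
      _ = ∑ D ∈ (u \ B₁).powerset, ∑ B₂ ∈ D.powerset,
            (-1:ℚ) ^ (B₁.card + B₂.card) * 2 ^ (N.rkSet (↑B₁ ∪ ↑D) - N.rkSet ↑B₁) := by
          rw [swap_sum (u \ B₁) (fun D B₂ =>
            (-1:ℚ) ^ (B₁.card + B₂.card) * 2 ^ (N.rkSet (↑B₁ ∪ ↑D) - N.rkSet ↑B₁))]
      _ = ∑ D ∈ (u \ B₁).powerset,
            ((-1:ℚ) ^ B₁.card * 2 ^ (N.rkSet (↑B₁ ∪ ↑D) - N.rkSet ↑B₁)) *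
              ∑ B₂ ∈ D.powerset, (-1:ℚ) ^ B₂.card := by
          refine Finset.sum_congr rfl fun D hD => ?_
          rw [Finset.mul_sum]
          refine Finset.sum_congr rfl fun B₂ hB₂ => ?_
          rw [pow_add]
          ring
      _ = ∑ D ∈ (u \ B₁).powerset,
            if D = ∅ then (-1:ℚ) ^ B₁.card * 2 ^ (N.rkSet (↑B₁ ∪ ↑D) - N.rkSet ↑B₁) else 0 := by
          refine Finset.sum_congr rfl fun D hD => ?_
          rw [sum_pow_neg_one]
          split <;> simp
      _ = (-1:ℚ) ^ B₁.card := by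
          rw [Finset.sum_eq_single_of_mem (∅ : Finset α) (Finset.empty_mem_powerset _)
            (fun D _ hD => if_neg hD)]
          simp
  rw [Finset.sum_congr rfl step3, sum_pow_neg_one]

end MicroAux
end Aux5
section Aux6
namespace MicroAux
open Matroid Set Finset

variable {α : Type*} {M N : Matroid α} {X Y R I J C F G B W : Set α} {e : α} {t : ℚ}

lemma finsum_flat (M : Matroid α) (u : Finset α) (hu : ↑u = M.E) (Φ : Finset (Finset α))
    (hΦ : ∀ A : Finset α, A ∈ Φ ↔ M.IsFlat ↑A) (f : Set α → ℚ) :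
    (∑ᶠ (F : Set α) (_ : M.IsFlat F), f F) = ∑ A ∈ Φ, f ↑A := by
  classical
  rw [finsum_cond_eq_sum f _ (Φ.image ((↑) : Finset α → Set α)) (fun S => ?_)]
  · exact Finset.sum_image fun x _ y _ h => Finset.coe_injective h
  · constructor
    · intro hS
      have hSfin : S.Finite := u.finite_toSet.subset (hu ▸ hS.subset_ground)
      exact Finset.mem_image.2 ⟨hSfin.toFinset,
        (hΦ _).2 (by rwa [hSfin.coe_toFinset]), hSfin.coe_toFinset⟩
    · intro hS
      obtain ⟨A, hA, rfl⟩ := Finset.mem_image.1 hS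
      exact (hΦ A).1 hA

lemma con_charPoly_zero_of_not_flat (hfin : M.E.Finite) (hGf : M.IsFlat G) (hT : X ⊆ G)
    (hnf : ¬ M.IsFlat X) (t : ℚ) : ((M ↾ G).con X).charPoly t = 0 := by
  have hGE : G ⊆ M.E := hGf.subset_ground
  have hXE : X ⊆ M.E := hT.trans hGE
  have hne : M.closure X ≠ X := fun h => hnf (flat_iff'.2 ⟨h, hXE⟩)
  obtain ⟨e, hecl, heX⟩ := Set.exists_of_ssubset
    ((M.subset_closure X hXE).ssubset_of_ne (Ne.symm hne))
  have hclG : M.closure X ⊆ G := by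
    rw [← hGf.closure]; exact M.closure_subset_closure hT
  obtain ⟨J, hJ⟩ := (M ↾ G).exists_isBasis' X
  have hJM : M.IsBasis' J X := (basis'_restrict_of_subset hT).1 hJ
  refine charPoly_eq_zero_of_loop ?_ (e := e) ?_ ?_ t
  · rw [con_ground, Matroid.restrict_ground_eq]
    exact (hfin.subset hGE).diff
  · rw [con_ground, Matroid.restrict_ground_eq]
    exact ⟨hclG hecl, heX⟩
  · intro hind
    rw [con_indep_iff (show X ⊆ (M ↾ G).E by rwa [Matroid.restrict_ground_eq]) hJ] at hind
    have h1 : M.Indep ({e} ∪ J) := (Matroid.restrict_indep_iff.1 hind.1).1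
    rw [Set.singleton_union] at h1
    have heJ : e ∉ J := fun h => heX (hJM.subset h)
    exact ((hJM.indep.insert_indep_iff_of_notMem heJ).1 h1).2
      (by rw [hJM.closure_eq_closure]; exact hecl)

lemma neg_one_pow_sub {a b : ℕ} (h : b ≤ a) : ((-1 : ℚ)) ^ (a - b) * (-1) ^ b = (-1) ^ a := by
  rw [← pow_add]
  congr 1
  omega

end MicroAux
end Aux6
section MainProof
open MicroAux

theorem microMult_relation_aux (P : Matroid α → Polynomial ℚ)
    (M : Matroid α) (hfin : M.E.Finite) (hl : M.IsLoopless) :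
    (-1 : ℚ) ^ M.rank * (P M).eval 1 =
      ∑ᶠ (F : Set α) (_ : M.IsFlat F),
        microMult P (M.con F) * (-1 : ℚ) ^ M.rkSet F * (M ↾ F).charPoly 2 := by
  classical
  obtain ⟨u, hu⟩ : ∃ u : Finset α, ↑u = M.E := ⟨hfin.toFinset, hfin.coe_toFinset⟩
  set Φ : Finset (Finset α) := u.powerset.filter (fun A => M.IsFlat ↑A) with hΦdef
  have hΦ : ∀ A : Finset α, A ∈ Φ ↔ M.IsFlat ↑A := by
    intro A
    simp only [hΦdef, Finset.mem_filter, Finset.mem_powerset]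
    exact ⟨fun h => h.2, fun h => ⟨by rw [← Finset.coe_subset, hu]; exact h.subset_ground, h⟩⟩
  rw [finsum_flat M u hu Φ hΦ
    (fun F => microMult P (M.con F) * (-1 : ℚ) ^ M.rkSet F * (M ↾ F).charPoly 2)]
  have hexp : ∀ A ∈ Φ,
      microMult P (M.con (↑A : Set α)) * (-1 : ℚ) ^ M.rkSet ↑A * (M ↾ (↑A : Set α)).charPoly 2
        = ∑ B ∈ Φ.filter (fun B => A ⊆ B),
            (-1 : ℚ) ^ M.rank * ((P (M.con (↑B : Set α))).eval 1 *
              ((M ↾ (↑A : Set α)).charPoly 2 * 2 ^ (M.rkSet ↑B - M.rkSet ↑A) *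
                ((M ↾ (↑B : Set α)).con ↑A).charPoly (1/2))) := by
    intro A hA
    have hAf : M.IsFlat ↑A := (hΦ A).1 hA
    have hAE : (↑A : Set α) ⊆ M.E := hAf.subset_ground
    have huA : (↑(u \ A) : Set α) = (M.con (↑A : Set α)).E := by
      rw [con_ground, Finset.coe_sdiff, hu]
    set ΦA : Finset (Finset α) :=
      (u \ A).powerset.filter (fun B => (M.con (↑A : Set α)).IsFlat ↑B) with hΦAdef
    have hΦA : ∀ B : Finset α, B ∈ ΦA ↔ (M.con (↑A : Set α)).IsFlat ↑B := by
      intro B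
      simp only [hΦAdef, Finset.mem_filter, Finset.mem_powerset]
      exact ⟨fun h => h.2, fun h => ⟨by rw [← Finset.coe_subset, huA]; exact h.subset_ground, h⟩⟩
    have hmm : microMult P (M.con (↑A : Set α))
        = (-1 : ℚ) ^ (M.con (↑A : Set α)).rank *
          ∑ᶠ (F : Set α) (_ : (M.con (↑A : Set α)).IsFlat F),
            2 ^ (M.con (↑A : Set α)).rkSet F * ((M.con ↑A ↾ F).charPoly (1/2)) *
              (P ((M.con (↑A : Set α)).con F)).eval 1 := rfl
    rw [hmm, finsum_flat (M.con ↑A) (u \ A) huA ΦA hΦA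
      (fun F => 2 ^ (M.con (↑A : Set α)).rkSet F * ((M.con ↑A ↾ F).charPoly (1/2)) *
        (P ((M.con (↑A : Set α)).con F)).eval 1)]
    have hbij : (∑ B' ∈ ΦA, (2:ℚ) ^ (M.con (↑A : Set α)).rkSet ↑B' *
          ((M.con ↑A ↾ (↑B' : Set α)).charPoly (1/2)) *
          (P ((M.con (↑A : Set α)).con ↑B')).eval 1)
        = ∑ B ∈ Φ.filter (fun B => A ⊆ B),
            (2:ℚ) ^ (M.con (↑A : Set α)).rkSet ↑(B \ A) *
              ((M.con ↑A ↾ (↑(B \ A) : Set α)).charPoly (1/2)) *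
              (P ((M.con (↑A : Set α)).con ↑(B \ A))).eval 1 := by
      refine Finset.sum_nbij' (fun B' => A ∪ B') (fun B => B \ A) ?_ ?_ ?_ ?_ ?_
      · intro B' hB'
        have hf : (M.con (↑A : Set α)).IsFlat ↑B' := (hΦA B').1 hB'
        rw [con_flat_iff hfin hAf] at hf
        rw [Finset.mem_filter]
        refine ⟨(hΦ _).2 ?_, Finset.subset_union_left⟩
        rw [Finset.coe_union, Set.union_comm]
        exact hf.1
      · intro B hB
        rw [Finset.mem_filter] at hB
        have hBf : M.IsFlat ↑B := (hΦ B).1 hB.1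
        refine (hΦA _).2 ?_
        rw [con_flat_iff hfin hAf, Finset.coe_sdiff]
        refine ⟨?_, Set.diff_subset_diff_left hBf.subset_ground⟩
        rw [Set.diff_union_of_subset (Finset.coe_subset.2 hB.2)]
        exact hBf
      · intro B' hB'
        have hsub := Finset.subset_sdiff.1
          (Finset.mem_powerset.1 (Finset.mem_filter.1 ((hΦAdef ▸ hB' : B' ∈ _))).1)
        exact Finset.union_sdiff_cancel_left hsub.2.symm
      · intro B hB
        rw [Finset.mem_filter] at hB
        exact Finset.union_sdiff_of_subset hB.2
      · intro B' hB'
        have hsub := Finset.subset_sdiff.1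
          (Finset.mem_powerset.1 (Finset.mem_filter.1 ((hΦAdef ▸ hB' : B' ∈ _))).1)
        rw [Finset.union_sdiff_cancel_left hsub.2.symm]
    rw [hbij, rank_con hfin hAE, Finset.mul_sum, Finset.sum_mul, Finset.sum_mul]
    refine Finset.sum_congr rfl fun B hB => ?_
    rw [Finset.mem_filter] at hB
    have hAB : A ⊆ B := hB.2
    have hBf : M.IsFlat ↑B := (hΦ B).1 hB.1
    have hBE : (↑B : Set α) ⊆ M.E := hBf.subset_ground
    have hcAB : (↑A : Set α) ⊆ ↑B := Finset.coe_subset.2 hAB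
    have c0 : (↑(B \ A) : Set α) = ↑B \ ↑A := Finset.coe_sdiff B A
    have c1 : (M.con (↑A : Set α)).rkSet ↑(B \ A) = M.rkSet ↑B - M.rkSet ↑A := by
      rw [c0, rkSet_con hfin hAE (Set.diff_subset_diff_left hBE),
        Set.diff_union_of_subset hcAB]
    have c2 : M.con (↑A : Set α) ↾ (↑(B \ A) : Set α) = (M ↾ (↑B : Set α)).con ↑A := by
      rw [c0, con_restrict hfin hcAB hBE]
    have c3 : (M.con (↑A : Set α)).con ↑(B \ A) = M.con (↑B : Set α) := by
      rw [c0, con_con, Set.union_diff_cancel hcAB]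
    rw [c1, c2, c3]
    have hsign := neg_one_pow_sub (rkSet_le_rank hfin (X := (↑A : Set α)))
    rw [← hsign]
    ring
  rw [Finset.sum_congr rfl hexp]
  have hswap : (∑ A ∈ Φ, ∑ B ∈ Φ.filter (fun B => A ⊆ B),
        (-1 : ℚ) ^ M.rank * ((P (M.con (↑B : Set α))).eval 1 *
          ((M ↾ (↑A : Set α)).charPoly 2 * 2 ^ (M.rkSet ↑B - M.rkSet ↑A) *
            ((M ↾ (↑B : Set α)).con ↑A).charPoly (1/2))))
      = ∑ B ∈ Φ, ∑ A ∈ Φ.filter (fun A => A ⊆ B),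
        (-1 : ℚ) ^ M.rank * ((P (M.con (↑B : Set α))).eval 1 *
          ((M ↾ (↑A : Set α)).charPoly 2 * 2 ^ (M.rkSet ↑B - M.rkSet ↑A) *
            ((M ↾ (↑B : Set α)).con ↑A).charPoly (1/2))) := by
    refine Finset.sum_comm' fun A B => ?_
    constructor
    · rintro ⟨h1, h2⟩
      exact ⟨Finset.mem_filter.2 ⟨h1, (Finset.mem_filter.1 h2).2⟩, (Finset.mem_filter.1 h2).1⟩
    · rintro ⟨h1, h2⟩
      exact ⟨(Finset.mem_filter.1 h1).1, Finset.mem_filter.2 ⟨h2, (Finset.mem_filter.1 h1).2⟩⟩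
  rw [hswap]
  have hinner : ∀ B ∈ Φ,
      (∑ A ∈ Φ.filter (fun A => A ⊆ B),
        (-1 : ℚ) ^ M.rank * ((P (M.con (↑B : Set α))).eval 1 *
          ((M ↾ (↑A : Set α)).charPoly 2 * 2 ^ (M.rkSet ↑B - M.rkSet ↑A) *
            ((M ↾ (↑B : Set α)).con ↑A).charPoly (1/2))))
      = (-1 : ℚ) ^ M.rank * ((P (M.con (↑B : Set α))).eval 1 *
          (if B = ∅ then 1 else 0)) := by
    intro B hB
    have hBf : M.IsFlat ↑B := (hΦ B).1 hB
    have hBE : (↑B : Set α) ⊆ M.E := hBf.subset_ground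
    have hBu : B ⊆ u := by rw [← Finset.coe_subset, hu]; exact hBE
    rw [← Finset.mul_sum, ← Finset.mul_sum]
    congr 1
    congr 1
    have hset : Φ.filter (fun A => A ⊆ B)
        = B.powerset.filter (fun A : Finset α => M.IsFlat (↑A : Set α)) := by
      ext A
      simp only [hΦdef, Finset.mem_filter, Finset.mem_powerset]
      exact ⟨fun h => ⟨h.2, h.1.2⟩, fun h => ⟨⟨h.1.trans hBu, h.2⟩, h.1⟩⟩
    have hzero : ∀ A ∈ B.powerset,
        A ∉ B.powerset.filter (fun A : Finset α => M.IsFlat (↑A : Set α)) →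
        (M ↾ (↑A : Set α)).charPoly 2 * 2 ^ (M.rkSet ↑B - M.rkSet ↑A) *
          ((M ↾ (↑B : Set α)).con ↑A).charPoly (1/2) = 0 := by
      intro A hA hA'
      have hnf : ¬ M.IsFlat ↑A := fun h => hA' (Finset.mem_filter.2 ⟨hA, h⟩)
      rw [con_charPoly_zero_of_not_flat hfin hBf
        (Finset.coe_subset.2 (Finset.mem_powerset.1 hA)) hnf (1/2)]
      ring
    rw [hset, Finset.sum_subset (Finset.filter_subset _ _) hzero]
    have hNfin : (M ↾ (↑B : Set α)).E.Finite := by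
      rw [Matroid.restrict_ground_eq]; exact hfin.subset hBE
    have hNu : (↑B : Set α) = (M ↾ (↑B : Set α)).E := by rw [Matroid.restrict_ground_eq]
    have hterm : ∀ A ∈ B.powerset,
        (M ↾ (↑A : Set α)).charPoly 2 * 2 ^ (M.rkSet ↑B - M.rkSet ↑A) *
          ((M ↾ (↑B : Set α)).con ↑A).charPoly (1/2)
        = ((M ↾ (↑B : Set α)) ↾ (↑A : Set α)).charPoly 2 *
            2 ^ ((M ↾ (↑B : Set α)).rank - (M ↾ (↑B : Set α)).rkSet ↑A) *
            ((M ↾ (↑B : Set α)).con ↑A).charPoly (1/2) := by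
      intro A hA
      have hcAB : (↑A : Set α) ⊆ ↑B := Finset.coe_subset.2 (Finset.mem_powerset.1 hA)
      rw [Matroid.restrict_restrict_eq M hcAB, rank_restrict hfin hBE,
        rkSet_restrict hfin hBE hcAB]
    rw [Finset.sum_congr rfl hterm, conv_sum (M ↾ (↑B : Set α)) hNfin B hNu.symm]
  rw [Finset.sum_congr rfl hinner]
  rw [Finset.sum_eq_single_of_mem (∅ : Finset α)
    ((hΦ ∅).2 (by rw [Finset.coe_empty]; exact flat_empty hl))
    (fun B _ hBne => by rw [if_neg hBne]; ring)]
  rw [if_pos rfl, Finset.coe_empty, con_empty]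
  ring

end MainProof

/-- The microlocal multiplicity `m_M = (-1)^(rk M) ∑_F 2^(rk F) χ_{M^F}(1/2) P_{M_F}(1)`
satisfies the relation
`(-1)^(rk M) P_M(1) = ∑_{F ∈ L(M)} m_{M_F} (-1)^(rk F) χ_{M^F}(2)`. -/
theorem microMult_relation (P : Matroid α → Polynomial ℚ) (hP : IsKLFamily P)
    (M : Matroid α) (hfin : M.E.Finite) (hl : M.IsLoopless) :
    (-1 : ℚ) ^ M.rank * (P M).eval 1 =
      ∑ᶠ (F : Set α) (_ : M.IsFlat F),
        microMult P (M.con F) * (-1 : ℚ) ^ M.rkSet F * (M ↾ F).charPoly 2 :=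
  microMult_relation_aux P M hfin hl
end

section
/- Fix a loopless matroid M of positive rank and define Eu_N = χ_N(2) and c_N = −2^{rk N} χ_N(1/2) for all minors N. Then for every nonempty flat G of M, Σ_{F : ∅ ≤ F ≤ G} c_{M^F} · Eu_{(M^G)_F} = 0, where (M^G)_F denotes the contraction of the restriction M^G by the flat F. -/
open scoped Matroid

variable {α : Type*}

/-! ### Auxiliary development -/

open Set Finset
open scoped Classical

namespace Matroid

variable {M : Matroid α} {I J X Y : Set α}

lemma rkSet_eq_of_forall (hJ : M.Indep J) (hJX : J ⊆ X)
    (hmax : ∀ I, M.Indep I → I ⊆ X → I.ncard ≤ J.ncard) : M.rkSet X = J.ncard := by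
  apply le_antisymm
  · exact ciSup_le' (fun I => hmax I.1 I.2.1 I.2.2)
  · exact le_ciSup (f := fun I : {I : Set α // M.Indep I ∧ I ⊆ X} => I.1.ncard)
      ⟨J.ncard, by rintro n ⟨I, rfl⟩; exact hmax I.1 I.2.1 I.2.2⟩ ⟨J, hJ, hJX⟩

lemma ncard_le_ncard_of_basis' (hfin : M.E.Finite) (hI : M.Indep I) (hIX : I ⊆ X)
    (hJ : M.IsBasis' J X) : I.ncard ≤ J.ncard := by
  obtain ⟨J', hJ', hIJ'⟩ := hI.subset_isBasis'_of_subset hIX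
  have h := hJ'.encard_eq_encard hJ
  have hJ'fin : J'.Finite := hfin.subset hJ'.indep.subset_ground
  calc I.ncard ≤ J'.ncard := ncard_le_ncard hIJ' hJ'fin
    _ = J.ncard := by rw [ncard_def, h, ← ncard_def]

lemma IsBasis'.rkSet_eq (hfin : M.E.Finite) (hJ : M.IsBasis' J X) : M.rkSet X = J.ncard :=
  rkSet_eq_of_forall hJ.indep hJ.subset fun I hI hIX => ncard_le_ncard_of_basis' hfin hI hIX hJ

lemma Indep.ncard_le_rkSet (hfin : M.E.Finite) (hI : M.Indep I) (hIX : I ⊆ X) :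
    I.ncard ≤ M.rkSet X := by
  obtain ⟨K, hK⟩ := M.exists_isBasis' X
  rw [hK.rkSet_eq hfin]
  exact ncard_le_ncard_of_basis' hfin hI hIX hK

lemma rkSet_mono (hfin : M.E.Finite) (hXY : X ⊆ Y) : M.rkSet X ≤ M.rkSet Y := by
  obtain ⟨J, hJ⟩ := M.exists_isBasis' X
  rw [hJ.rkSet_eq hfin]
  exact hJ.indep.ncard_le_rkSet hfin (hJ.subset.trans hXY)

lemma rkSet_closure_eq (hfin : M.E.Finite) (X : Set α) :
    M.rkSet (M.closure X) = M.rkSet X := by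
  obtain ⟨J, hJ⟩ := M.exists_isBasis' X
  rw [hJ.rkSet_eq hfin, hJ.isBasis_closure_right.isBasis'.rkSet_eq hfin]

lemma rkSet_restrict (hfin : M.E.Finite) {R : Set α} (hR : R ⊆ M.E) (X : Set α) :
    (M ↾ R).rkSet X = M.rkSet (X ∩ R) := by
  obtain ⟨J, hJ⟩ := M.exists_isBasis' (X ∩ R)
  have hJ' : (M ↾ R).IsBasis' J X := by
    rw [isBasis'_restrict_iff]; exact ⟨hJ, hJ.subset.trans inter_subset_right⟩
  have hfin' : (M ↾ R).E.Finite := by rw [restrict_ground_eq]; exact hfin.subset hR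
  rw [hJ'.rkSet_eq hfin', hJ.rkSet_eq hfin]

lemma rkSet_dual_add (hfin : M.E.Finite) (hX : X ⊆ M.E) :
    M✶.rkSet X + M.rank = X.ncard + M.rkSet (M.E \ X) := by
  obtain ⟨I, hI⟩ := M.exists_isBasis (M.E \ X) diff_subset
  obtain ⟨B, hB, hIB⟩ := hI.indep.subset_isBasis_of_subset hI.indep.subset_ground
  have hBbase : M.IsBase B := isBasis_ground_iff.mp hB
  have hXfin : X.Finite := hfin.subset hX
  have hBfin : B.Finite := hfin.subset hBbase.subset_ground
  have hIfin : I.Finite := hfin.subset hI.indep.subset_ground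
  -- I = B ∩ (E \ X)
  have hIeq : I = B ∩ (M.E \ X) := by
    refine hI.eq_of_subset_indep (hBbase.indep.inter_right _) (subset_inter hIB hI.subset)
      inter_subset_right
  have h1 : (X ∩ B).ncard + (X \ B).ncard = X.ncard :=
    ncard_inter_add_ncard_diff_eq_ncard X B hXfin
  have h2 : (X ∩ B).ncard + I.ncard = B.ncard := by
    have hu : (X ∩ B) ∪ I = B := by
      rw [hIeq]
      ext x
      constructor
      · rintro (⟨-, h⟩ | ⟨h, -⟩) <;> exact h
      · intro hx
        by_cases hxX : x ∈ X
        · exact Or.inl ⟨hxX, hx⟩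
        · exact Or.inr ⟨hx, hBbase.subset_ground hx, hxX⟩
    have hd : Disjoint (X ∩ B) I := by
      rw [hIeq]
      exact Disjoint.mono inter_subset_left inter_subset_right disjoint_sdiff_right
    rw [← ncard_union_eq hd (hXfin.subset inter_subset_left) hIfin, hu]
  have hrE : M.rank = B.ncard := hB.isBasis'.rkSet_eq hfin
  have hrD : M.rkSet (M.E \ X) = I.ncard := hI.isBasis'.rkSet_eq hfin
  have hdual : M✶.rkSet X = (X \ B).ncard := by
    apply rkSet_eq_of_forall
    · rw [dual_indep_iff_exists (diff_subset.trans hX)]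
      exact ⟨B, hBbase, disjoint_sdiff_left⟩
    · exact diff_subset
    · intro K hK hKX
      obtain ⟨hKE, B₂, hB₂, hdisj⟩ := dual_indep_iff_exists'.mp hK
      have hB₂fin : B₂.Finite := hfin.subset hB₂.subset_ground
      have hKsub : K ⊆ X \ B₂ := subset_diff.mpr ⟨hKX, hdisj⟩
      have e1 : (X ∩ B₂).ncard + (X \ B₂).ncard = X.ncard :=
        ncard_inter_add_ncard_diff_eq_ncard X B₂ hXfin
      have e2 : (X ∩ B₂).ncard + (B₂ \ X).ncard = B₂.ncard := by
        rw [inter_comm, ncard_inter_add_ncard_diff_eq_ncard B₂ X hB₂fin]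
      have e3 : (B₂ \ X).ncard ≤ I.ncard := by
        rw [← hrD]
        refine Indep.ncard_le_rkSet hfin (hB₂.indep.subset diff_subset) ?_
        exact diff_subset_diff_left hB₂.subset_ground
      have e4 : B₂.ncard = B.ncard := by
        have := hB₂.encard_eq_encard_of_isBase hBbase
        rw [ncard_def, this, ← ncard_def]
      have e5 : K.ncard ≤ (X \ B₂).ncard := ncard_le_ncard hKsub (hXfin.subset diff_subset)
      omega
  omega



lemma con_ground (M : Matroid α) (C : Set α) : (M.con C).E = M.E \ C := by
  simp [con, del]

lemma rank_restrict (hfin : M.E.Finite) {R : Set α} (hR : R ⊆ M.E) :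
    (M ↾ R).rank = M.rkSet R := by
  rw [Matroid.rank, restrict_ground_eq, rkSet_restrict hfin hR, inter_self]

lemma rkSet_con_add (hfin : M.E.Finite) (hC : C ⊆ M.E) (hB : B ⊆ M.E \ C) :
    (M.con C).rkSet B + M.rkSet C = M.rkSet (C ∪ B) := by
  have hdfin : M✶.E.Finite := by rwa [dual_ground]
  have hCE : M.E \ C ⊆ M✶.E := by rw [dual_ground]; exact diff_subset
  have hDfin : (M✶ ↾ (M.E \ C)).E.Finite := by
    rw [restrict_ground_eq]; exact hfin.subset diff_subset
  have hcon : M.con C = (M✶ ↾ (M.E \ C))✶ := by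
    rw [con, del, dual_ground]
  have hBD : B ⊆ (M✶ ↾ (M.E \ C)).E := by rwa [restrict_ground_eq]
  -- main dual application
  have e1 := rkSet_dual_add (M := M✶ ↾ (M.E \ C)) hDfin hBD
  rw [restrict_ground_eq] at e1
  -- D.rank = P✶.rkSet (E \ C)
  have e2 : (M✶ ↾ (M.E \ C)).rank = M✶.rkSet (M.E \ C) := by
    rw [rank_restrict hdfin hCE]
  have e3 : M✶.rkSet (M.E \ C) + M.rank = (M.E \ C).ncard + M.rkSet C := by
    have := rkSet_dual_add (M := M) (X := M.E \ C) hfin diff_subset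
    rwa [diff_diff_cancel_left hC] at this
  have e4 : (M✶ ↾ (M.E \ C)).rkSet ((M.E \ C) \ B) = M✶.rkSet ((M.E \ C) \ B) := by
    rw [rkSet_restrict hdfin hCE, inter_eq_self_of_subset_left diff_subset]
  have e5 : M✶.rkSet ((M.E \ C) \ B) + M.rank = ((M.E \ C) \ B).ncard + M.rkSet (C ∪ B) := by
    have := rkSet_dual_add (M := M) (X := (M.E \ C) \ B) hfin ((diff_subset).trans diff_subset)
    have hs : M.E \ ((M.E \ C) \ B) = C ∪ B := by
      rw [diff_diff, diff_diff_cancel_left (union_subset hC (hB.trans diff_subset))]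
    rwa [hs] at this
  have e6 : B.ncard + ((M.E \ C) \ B).ncard = (M.E \ C).ncard := by
    rw [add_comm, ncard_diff_add_ncard_of_subset hB (hfin.subset diff_subset)]
  rw [← hcon, e2, e4] at e1
  omega

lemma flat_closure (M : Matroid α) (X : Set α) : M.IsFlat (M.closure X) := by
  rw [closure_def]
  have hne : Nonempty {F : Set α // F ∈ {F | M.IsFlat F ∧ X ∩ M.E ⊆ F}} :=
    ⟨⟨M.E, M.ground_isFlat, inter_subset_right⟩⟩
  rw [sInter_eq_iInter]
  exact IsFlat.iInter (fun F => F.2.1)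

open scoped Classical in
lemma finsum_cond_eq_sum (E' : Finset α) (P : Set α → Prop) (f : Set α → ℚ)
    (hP : ∀ S, P S → S ⊆ ↑E') :
    ∑ᶠ (S : Set α) (_ : P S), f S = ∑ A ∈ E'.powerset.filter (fun A : Finset α => P ↑A), f ↑A := by
  have h1 : ∑ᶠ (S : Set α) (_ : P S), f S = ∑ᶠ S ∈ {S : Set α | P S}, f S := rfl
  have h2 : {S : Set α | P S} =
      ↑((E'.powerset.filter (fun A : Finset α => P ↑A)).image (fun A : Finset α => (↑A : Set α))) := by
    ext S
    simp only [Finset.coe_image, Set.mem_image, Finset.mem_coe, Finset.mem_filter,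
      Finset.mem_powerset, Set.mem_setOf_eq]
    constructor
    · intro hS
      have hSfin : S.Finite := E'.finite_toSet.subset (hP S hS)
      refine ⟨hSfin.toFinset, ⟨⟨?_, ?_⟩, hSfin.coe_toFinset⟩⟩
      · rw [← Finset.coe_subset, hSfin.coe_toFinset]; exact hP S hS
      · rw [hSfin.coe_toFinset]; exact hS
    · rintro ⟨A, ⟨-, hPA⟩, rfl⟩; exact hPA
  rw [h1, h2, finsum_mem_coe_finset,
    Finset.sum_image (fun A _ B _ h => Finset.coe_injective h)]

lemma charPoly_eq_sum (M : Matroid α) (E' : Finset α) (hE : (E' : Set α) = M.E) (t : ℚ) :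
    M.charPoly t = ∑ A ∈ E'.powerset, (-1 : ℚ)^A.card * t^(M.rank - M.rkSet ↑A) := by
  classical
  rw [charPoly, ← hE, finsum_cond_eq_sum E' (fun S => S ⊆ ↑E') _ (fun S h => h)]
  rw [Finset.filter_true_of_mem (fun A hA => Finset.coe_subset.mpr (Finset.mem_powerset.mp hA))]
  exact Finset.sum_congr rfl fun A _ => by rw [Set.ncard_coe_finset]

lemma pow_half_mul (a b : ℕ) (h : a ≤ b) : (2:ℚ)^b * (1/2:ℚ)^(b-a) = 2^a := by
  have h2 : (b - a) + a = b := by omega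
  have : (2:ℚ)^b = 2^(b-a) * 2^a := by rw [← pow_add, h2]
  rw [this, one_div, inv_pow]
  field_simp

lemma cInv_restrict_eq (hfin : M.E.Finite) (hF : F ⊆ M.E) (F' : Finset α)
    (hF' : (F' : Set α) = F) :
    (M ↾ F).cInv = -∑ A ∈ F'.powerset, (-1:ℚ)^A.card * 2^(M.rkSet ↑A) := by
  rw [cInv, charPoly_eq_sum (M ↾ F) F' (by rw [restrict_ground_eq, hF']),
    neg_mul, Finset.mul_sum, neg_inj]
  refine Finset.sum_congr rfl fun A hA => ?_
  have hAF : (A : Set α) ⊆ F := by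
    rw [← hF']; exact Finset.coe_subset.mpr (Finset.mem_powerset.mp hA)
  have h1 : (M ↾ F).rank = M.rkSet F := rank_restrict hfin hF
  have h2 : (M ↾ F).rkSet ↑A = M.rkSet ↑A := by
    rw [rkSet_restrict hfin hF, inter_eq_self_of_subset_left hAF]
  have h3 : M.rkSet ↑A ≤ M.rkSet F := rkSet_mono hfin hAF
  rw [h1, h2, mul_comm ((-1:ℚ)^A.card) _, ← mul_assoc, pow_half_mul _ _ h3, mul_comm]

lemma charPoly_con_eq [DecidableEq α] (hfin : M.E.Finite) (hG : G ⊆ M.E) (hFG : F ⊆ G)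
    (G' F' : Finset α) (hG' : (G' : Set α) = G) (hF' : (F' : Set α) = F) :
    ((M ↾ G).con F).charPoly 2 =
      ∑ B ∈ (G' \ F').powerset, (-1:ℚ)^B.card * 2^(M.rkSet G - M.rkSet (F ∪ ↑B)) := by
  have hfinG : (M ↾ G).E.Finite := by rw [restrict_ground_eq]; exact hfin.subset hG
  have hgr : (((M ↾ G).con F).E : Set α) = G \ F := by
    rw [con_ground, restrict_ground_eq]
  have hcoe : ((G' \ F' : Finset α) : Set α) = G \ F := by
    rw [Finset.coe_sdiff, hG', hF']
  rw [charPoly_eq_sum _ (G' \ F') (by rw [hcoe, hgr])]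
  refine Finset.sum_congr rfl fun B hB => ?_
  have hBsub : (B : Set α) ⊆ G \ F := by
    rw [← hcoe]; exact Finset.coe_subset.mpr (Finset.mem_powerset.mp hB)
  have hFgr : F ⊆ (M ↾ G).E := by rwa [restrict_ground_eq]
  have hBgr : (B : Set α) ⊆ (M ↾ G).E \ F := by rwa [restrict_ground_eq]
  have q1 : ((M ↾ G).con F).rkSet ↑B + M.rkSet F = M.rkSet (F ∪ ↑B) := by
    have := rkSet_con_add (M := M ↾ G) hfinG hFgr hBgr
    rwa [rkSet_restrict hfin hG, rkSet_restrict hfin hG,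
      inter_eq_self_of_subset_left hFG,
      inter_eq_self_of_subset_left
        (union_subset hFG (hBsub.trans diff_subset))] at this
  have q2 : ((M ↾ G).con F).rank + M.rkSet F = M.rkSet G := by
    have h := rkSet_con_add (M := M ↾ G) (C := F) (B := (M ↾ G).E \ F) hfinG hFgr Subset.rfl
    rw [restrict_ground_eq] at h
    rw [Matroid.rank, hgr]
    rwa [rkSet_restrict hfin hG, rkSet_restrict hfin hG,
      inter_eq_self_of_subset_left hFG,
      inter_eq_self_of_subset_left (union_subset hFG diff_subset),
      union_diff_cancel hFG] at h
  have : ((M ↾ G).con F).rank - ((M ↾ G).con F).rkSet ↑B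
      = M.rkSet G - M.rkSet (F ∪ ↑B) := by omega
  rw [this]


end Matroid

section MoebiusAux
variable [DecidableEq α]
lemma moebius_left_of_right (Fl : Finset (Finset α)) (m : Finset α → Finset α → ℚ)
    (hR : ∀ F ∈ Fl, ∀ F₂ ∈ Fl, F ⊆ F₂ →
      ∑ F' ∈ Fl.filter (fun F' => F ⊆ F' ∧ F' ⊆ F₂), m F F' = if F = F₂ then 1 else 0) :
    ∀ n : ℕ, ∀ F₀ ∈ Fl, ∀ F' ∈ Fl, F₀ ⊆ F' → (F' \ F₀).card ≤ n →
      ∑ F ∈ Fl.filter (fun F => F₀ ⊆ F ∧ F ⊆ F'), m F F' = if F₀ = F' then 1 else 0 := by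
  have base : ∀ F' ∈ Fl, ∑ F ∈ Fl.filter (fun F => F' ⊆ F ∧ F ⊆ F'), m F F' = 1 := by
    intro F' hF'
    have hfilt : Fl.filter (fun F => F' ⊆ F ∧ F ⊆ F') = {F'} := by
      ext F
      simp only [Finset.mem_filter, Finset.mem_singleton]
      constructor
      · rintro ⟨-, h1, h2⟩; exact Finset.Subset.antisymm h2 h1
      · rintro rfl; exact ⟨hF', Finset.Subset.rfl, Finset.Subset.rfl⟩
    have h := hR F' hF' F' hF' Finset.Subset.rfl
    rw [hfilt, Finset.sum_singleton, if_pos rfl] at h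
    rw [hfilt, Finset.sum_singleton]
    exact h
  intro n
  induction n with
  | zero =>
    intro F₀ hF₀ F' hF' hss hcard
    have hF'eq : F' = F₀ := by
      have h0 : F' \ F₀ = ∅ := Finset.card_eq_zero.mp (Nat.le_zero.mp hcard)
      have h2 : F' ⊆ F₀ := by
        intro x hx
        by_contra hxF
        exact (Finset.eq_empty_iff_forall_notMem.mp h0 x) (Finset.mem_sdiff.mpr ⟨hx, hxF⟩)
      exact Finset.Subset.antisymm h2 hss
    subst hF'eq
    rw [if_pos rfl]
    exact base F' hF'
  | succ n ih =>
    intro F₀ hF₀ F' hF' hss hcard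
    by_cases heq : F₀ = F'
    · subst heq
      rw [if_pos rfl]
      exact base F₀ hF₀
    have key1 : ∑ F ∈ Fl.filter (fun F => F₀ ⊆ F ∧ F ⊆ F'),
        (∑ F'' ∈ Fl.filter (fun F'' => F ⊆ F'' ∧ F'' ⊆ F'), m F F'') = 1 := by
      have hcg : ∀ F ∈ Fl.filter (fun F => F₀ ⊆ F ∧ F ⊆ F'),
          (∑ F'' ∈ Fl.filter (fun F'' => F ⊆ F'' ∧ F'' ⊆ F'), m F F'')
            = if F = F' then 1 else 0 := by
        intro F hF
        rw [Finset.mem_filter] at hF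
        exact hR F hF.1 F' hF' hF.2.2
      rw [Finset.sum_congr rfl hcg, Finset.sum_ite_eq' _ F' (fun _ => (1:ℚ)),
        if_pos (Finset.mem_filter.mpr ⟨hF', hss, Finset.Subset.rfl⟩)]
    have swap : ∑ F ∈ Fl.filter (fun F => F₀ ⊆ F ∧ F ⊆ F'),
        (∑ F'' ∈ Fl.filter (fun F'' => F ⊆ F'' ∧ F'' ⊆ F'), m F F'')
        = ∑ F'' ∈ Fl.filter (fun F'' => F₀ ⊆ F'' ∧ F'' ⊆ F'),
          (∑ F ∈ Fl.filter (fun F => F₀ ⊆ F ∧ F ⊆ F''), m F F'') := by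
      apply Finset.sum_comm'
      intro F F''
      simp only [Finset.mem_filter]
      constructor
      · rintro ⟨⟨hFl, h01, h1'⟩, ⟨hFl2, h12, h2'⟩⟩
        exact ⟨⟨hFl, h01, h12⟩, ⟨hFl2, h01.trans h12, h2'⟩⟩
      · rintro ⟨⟨hFl, h01, h12⟩, ⟨hFl2, _, h2'⟩⟩
        exact ⟨⟨hFl, h01, h12.trans h2'⟩, ⟨hFl2, h12, h2'⟩⟩
    have hmem : F' ∈ Fl.filter (fun F'' => F₀ ⊆ F'' ∧ F'' ⊆ F') :=
      Finset.mem_filter.mpr ⟨hF', hss, Finset.Subset.rfl⟩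
    rw [key1] at swap
    rw [← Finset.add_sum_erase _ _ hmem] at swap
    have hrest : ∑ F'' ∈ (Fl.filter (fun F'' => F₀ ⊆ F'' ∧ F'' ⊆ F')).erase F',
        (∑ F ∈ Fl.filter (fun F => F₀ ⊆ F ∧ F ⊆ F''), m F F'') = 1 := by
      have hcg : ∀ F'' ∈ (Fl.filter (fun F'' => F₀ ⊆ F'' ∧ F'' ⊆ F')).erase F',
          (∑ F ∈ Fl.filter (fun F => F₀ ⊆ F ∧ F ⊆ F''), m F F'')
            = if F₀ = F'' then 1 else 0 := by
        intro F'' hF''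
        have hne := Finset.ne_of_mem_erase hF''
        have hF''2 := Finset.mem_of_mem_erase hF''
        rw [Finset.mem_filter] at hF''2
        apply ih F₀ hF₀ F'' hF''2.1 hF''2.2.1
        have hssd : F'' \ F₀ ⊂ F' \ F₀ := by
          refine (Finset.ssubset_iff_of_subset (Finset.sdiff_subset_sdiff hF''2.2.2 Finset.Subset.rfl)).mpr ?_
          obtain ⟨x, hx1, hx2⟩ := Finset.exists_of_ssubset
            (Finset.ssubset_iff_subset_ne.mpr ⟨hF''2.2.2, hne⟩)
          exact ⟨x, Finset.mem_sdiff.mpr ⟨hx1, fun hc => hx2 (hF''2.2.1 hc)⟩,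
            fun hc => hx2 (Finset.mem_sdiff.mp hc).1⟩
        have := Finset.card_lt_card hssd
        omega
      rw [Finset.sum_congr rfl hcg, Finset.sum_ite_eq _ F₀ (fun _ => (1:ℚ)),
        if_pos (Finset.mem_erase.mpr ⟨heq, Finset.mem_filter.mpr ⟨hF₀, Finset.Subset.rfl, hss⟩⟩)]
    rw [hrest] at swap
    rw [if_neg heq]
    linarith

end MoebiusAux

open Matroid
variable {M : Matroid α}

noncomputable def mFl (M : Matroid α) (G' : Finset α) : Finset (Finset α) :=
  G'.powerset.filter (fun A => M.IsFlat ↑A ∧ (A : Set α) ⊆ (G' : Set α))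

noncomputable def mcl (M : Matroid α) (G' A : Finset α) : Finset α :=
  G'.filter (fun x => x ∈ M.closure ↑A)

noncomputable def mm (M : Matroid α) (G' F F₂ : Finset α) : ℚ :=
  ∑ B ∈ (G' \ F).powerset.filter (fun B => mcl M G' (F ∪ B) = F₂), (-1:ℚ)^B.card

noncomputable def mw (M : Matroid α) (G' F₁ : Finset α) : ℚ :=
  ∑ A ∈ F₁.powerset.filter (fun A => mcl M G' A = F₁), (-1:ℚ)^A.card

section ClLemmas
variable {G' A F F₁ F₂ : Finset α} (hG : M.IsFlat (G' : Set α))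
include hG

lemma closure_coe_subset (hA : A ⊆ G') : M.closure ↑A ⊆ (G' : Set α) := by
  have := M.closure_subset_closure (Finset.coe_subset.mpr hA)
  rwa [hG.closure] at this

lemma coe_mcl (hA : A ⊆ G') : (mcl M G' A : Set α) = M.closure ↑A := by
  ext x
  simp only [mcl, Finset.coe_filter, Set.mem_setOf_eq, Finset.mem_coe]
  exact ⟨fun h => h.2, fun h => ⟨closure_coe_subset hG hA h, h⟩⟩

lemma mcl_mem_mFl (hA : A ⊆ G') : mcl M G' A ∈ mFl M G' := by
  rw [mFl, Finset.mem_filter, Finset.mem_powerset]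
  refine ⟨Finset.filter_subset _ _, ?_, ?_⟩
  · rw [coe_mcl hG hA]; exact M.flat_closure ↑A
  · rw [coe_mcl hG hA]; exact closure_coe_subset hG hA

lemma subset_mcl (hA : A ⊆ G') : A ⊆ mcl M G' A := by
  rw [← Finset.coe_subset, coe_mcl hG hA]
  exact M.subset_closure ↑A ((Finset.coe_subset.mpr hA).trans hG.subset_ground)

lemma mFl_subset (hF : F ∈ mFl M G') : F ⊆ G' :=
  Finset.mem_powerset.mp (Finset.mem_filter.mp hF).1

lemma mFl_flat (hF : F ∈ mFl M G') : M.IsFlat ↑F := (Finset.mem_filter.mp hF).2.1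

lemma mcl_of_mem_mFl (hF : F ∈ mFl M G') : mcl M G' F = F := by
  apply Finset.coe_injective
  rw [coe_mcl hG (mFl_subset hG hF), (mFl_flat hG hF).closure]

lemma mcl_subset_iff (hA : A ⊆ G') (hF₂ : F₂ ∈ mFl M G') :
    mcl M G' A ⊆ F₂ ↔ A ⊆ F₂ := by
  constructor
  · exact fun h => (subset_mcl hG hA).trans h
  · intro h
    rw [← Finset.coe_subset, coe_mcl hG hA]
    have h2 : M.closure ↑A ⊆ M.closure ↑F₂ :=
      M.closure_subset_closure (Finset.coe_subset.mpr h)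
    rwa [(mFl_flat hG hF₂).closure] at h2

lemma rk_mcl (hfin : M.E.Finite) (hA : A ⊆ G') :
    M.rkSet ↑(mcl M G' A) = M.rkSet ↑A := by
  rw [coe_mcl hG hA, rkSet_closure_eq hfin]

omit hG in
lemma sum_pm_powerset (x : Finset α) :
    ∑ B ∈ x.powerset, (-1:ℚ)^B.card = if x = ∅ then 1 else 0 := by
  have h := Finset.sum_powerset_neg_one_pow_card (x := x)
  have h2 := congrArg (fun z : ℤ => (z : ℚ)) h
  push_cast at h2
  split_ifs at h2 ⊢ <;> assumption

lemma hR_mm :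
    ∀ F ∈ mFl M G', ∀ F₂ ∈ mFl M G', F ⊆ F₂ →
      ∑ F' ∈ (mFl M G').filter (fun F' => F ⊆ F' ∧ F' ⊆ F₂), mm M G' F F'
        = if F = F₂ then 1 else 0 := by
  classical
  intro F hF F₂ hF₂ hss
  have hrw : ∀ F' ∈ (mFl M G').filter (fun F' => F ⊆ F' ∧ F' ⊆ F₂),
      mm M G' F F' = ∑ B ∈ (G' \ F).powerset.filter
        (fun B => mcl M G' (F ∪ B) = F'), (-1:ℚ)^B.card := fun _ _ => rfl
  rw [Finset.sum_congr rfl hrw,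
    Finset.sum_fiberwise_eq_sum_filter _ _ (fun B => mcl M G' (F ∪ B)) (fun B => (-1:ℚ)^B.card)]
  have hfilt : (G' \ F).powerset.filter
      (fun B => mcl M G' (F ∪ B) ∈ (mFl M G').filter (fun F' => F ⊆ F' ∧ F' ⊆ F₂))
      = (F₂ \ F).powerset := by
    ext B
    simp only [Finset.mem_filter, Finset.mem_powerset]
    constructor
    · rintro ⟨hBs, -, -, hsub⟩
      have hFB : F ∪ B ⊆ G' := Finset.union_subset (mFl_subset hG hF)
        (hBs.trans (Finset.sdiff_subset))
      have hB2 : B ⊆ F₂ := (Finset.subset_union_right.trans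
        ((subset_mcl hG hFB).trans hsub))
      intro x hx
      exact Finset.mem_sdiff.mpr ⟨hB2 hx, (Finset.mem_sdiff.mp (hBs hx)).2⟩
    · intro hB
      have hBs : B ⊆ G' \ F :=
        hB.trans (Finset.sdiff_subset_sdiff (mFl_subset hG hF₂) Finset.Subset.rfl)
      have hFB : F ∪ B ⊆ G' := Finset.union_subset (mFl_subset hG hF)
        (hBs.trans Finset.sdiff_subset)
      refine ⟨hBs, mcl_mem_mFl hG hFB, ?_, ?_⟩
      · exact Finset.subset_union_left.trans (subset_mcl hG hFB)
      · rw [mcl_subset_iff hG hFB hF₂]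
        exact Finset.union_subset hss (hB.trans Finset.sdiff_subset)
  rw [hfilt, sum_pm_powerset]
  by_cases h : F = F₂
  · subst h
    rw [if_pos rfl, if_pos (Finset.sdiff_eq_empty_iff_subset.mpr Finset.Subset.rfl)]
  · rw [if_neg h, if_neg (fun hc => h (Finset.Subset.antisymm hss
      (Finset.sdiff_eq_empty_iff_subset.mp hc)))]
end ClLemmas

section Assembly
variable {G' A F F₁ F₂ : Finset α} (hG : M.IsFlat (G' : Set α))
include hG

lemma fiber_eq (hF₁F : F₁ ⊆ F) (hFG : F ⊆ G') :
    F.powerset.filter (fun A => mcl M G' A = F₁)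
      = F₁.powerset.filter (fun A => mcl M G' A = F₁) := by
  ext A
  simp only [Finset.mem_filter, Finset.mem_powerset]
  constructor
  · rintro ⟨hAF, h⟩
    exact ⟨h ▸ subset_mcl hG (hAF.trans hFG), h⟩
  · rintro ⟨hA1, h⟩
    exact ⟨hA1.trans hF₁F, h⟩

lemma stepX (hfin : M.E.Finite) (hF : F ∈ mFl M G') :
    ∑ A ∈ F.powerset, (-1:ℚ)^A.card * 2^(M.rkSet (A:Set α))
      = ∑ F₁ ∈ (mFl M G').filter (fun F₁ => F₁ ⊆ F),
          2^(M.rkSet (F₁:Set α)) * mw M G' F₁ := by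
  have hFG : F ⊆ G' := mFl_subset hG hF
  have hmaps : ∀ A ∈ F.powerset, mcl M G' A ∈ (mFl M G').filter (fun F₁ => F₁ ⊆ F) := by
    intro A hA
    rw [Finset.mem_powerset] at hA
    refine Finset.mem_filter.mpr ⟨mcl_mem_mFl hG (hA.trans hFG), ?_⟩
    exact (mcl_subset_iff hG (hA.trans hFG) hF).mpr hA
  rw [← Finset.sum_fiberwise_of_maps_to hmaps (fun A => (-1:ℚ)^A.card * 2^(M.rkSet (A:Set α)))]
  refine Finset.sum_congr rfl fun F₁ hF₁ => ?_
  rw [Finset.mem_filter] at hF₁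
  rw [fiber_eq hG hF₁.2 hFG, mw, Finset.mul_sum]
  refine Finset.sum_congr rfl fun A hA => ?_
  rw [Finset.mem_filter, Finset.mem_powerset] at hA
  have hAG : A ⊆ G' := hA.1.trans ((mFl_subset hG hF₁.1))
  rw [← hA.2, rk_mcl hG hfin hAG, mul_comm]

lemma stepY (hfin : M.E.Finite) (hF : F ∈ mFl M G') :
    ∑ B ∈ (G' \ F).powerset,
        (-1:ℚ)^B.card * 2^(M.rkSet (G':Set α) - M.rkSet ((F ∪ B : Finset α) : Set α))
      = ∑ F₂ ∈ (mFl M G').filter (fun F₂ => F ⊆ F₂),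
          2^(M.rkSet (G':Set α) - M.rkSet (F₂:Set α)) * mm M G' F F₂ := by
  have hFG : F ⊆ G' := mFl_subset hG hF
  have hmaps : ∀ B ∈ (G' \ F).powerset,
      mcl M G' (F ∪ B) ∈ (mFl M G').filter (fun F₂ => F ⊆ F₂) := by
    intro B hB
    rw [Finset.mem_powerset] at hB
    have hFB : F ∪ B ⊆ G' := Finset.union_subset hFG (hB.trans Finset.sdiff_subset)
    exact Finset.mem_filter.mpr ⟨mcl_mem_mFl hG hFB,
      Finset.subset_union_left.trans (subset_mcl hG hFB)⟩
  rw [← Finset.sum_fiberwise_of_maps_to hmaps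
    (fun B => (-1:ℚ)^B.card * 2^(M.rkSet (G':Set α) - M.rkSet ((F ∪ B : Finset α) : Set α)))]
  refine Finset.sum_congr rfl fun F₂ hF₂ => ?_
  rw [mm, Finset.mul_sum]
  refine Finset.sum_congr rfl fun B hB => ?_
  rw [Finset.mem_filter, Finset.mem_powerset] at hB
  have hFB : F ∪ B ⊆ G' := Finset.union_subset hFG (hB.1.trans Finset.sdiff_subset)
  rw [← hB.2, rk_mcl hG hfin hFB, mul_comm]

lemma stepW (hfin : M.E.Finite) (hne : G' ≠ ∅) :
    ∑ F₁ ∈ mFl M G', mw M G' F₁ = 0 := by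
  have hGmem : G' ∈ mFl M G' := by
    rw [mFl, Finset.mem_filter, Finset.mem_powerset]
    exact ⟨Finset.Subset.rfl, hG, Finset.Subset.rfl⟩
  have hmaps : ∀ A ∈ G'.powerset, mcl M G' A ∈ mFl M G' := by
    intro A hA
    rw [Finset.mem_powerset] at hA
    exact mcl_mem_mFl hG hA
  have h := Finset.sum_fiberwise_of_maps_to hmaps (fun A => (-1:ℚ)^A.card)
  rw [sum_pm_powerset, if_neg hne] at h
  rw [← h]
  refine Finset.sum_congr rfl fun F₁ hF₁ => ?_
  rw [mw, fiber_eq hG (mFl_subset hG hF₁) Finset.Subset.rfl]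

lemma core_identity (hfin : M.E.Finite) (hne : G' ≠ ∅) :
    ∑ F ∈ mFl M G',
      (∑ A ∈ F.powerset, (-1:ℚ)^A.card * 2^(M.rkSet (A:Set α))) *
      (∑ B ∈ (G' \ F).powerset,
        (-1:ℚ)^B.card * 2^(M.rkSet (G':Set α) - M.rkSet ((F ∪ B : Finset α) : Set α))) = 0 := by
  have hδ : ∀ F₁ ∈ mFl M G', ∀ F₂ ∈ mFl M G',
      ∑ F ∈ (mFl M G').filter (fun F => F₁ ⊆ F ∧ F ⊆ F₂), mm M G' F F₂
        = if F₁ = F₂ then 1 else 0 := by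
    intro F₁ hF₁ F₂ hF₂
    by_cases hss : F₁ ⊆ F₂
    · exact moebius_left_of_right (mFl M G') (mm M G') (hR_mm hG) ((F₂ \ F₁).card)
        F₁ hF₁ F₂ hF₂ hss le_rfl
    · rw [Finset.filter_false_of_mem (fun F _ hc => hss (hc.1.trans hc.2)),
        Finset.sum_empty, if_neg (fun hc => hss (by rw [hc]))]
  calc ∑ F ∈ mFl M G',
      (∑ A ∈ F.powerset, (-1:ℚ)^A.card * 2^(M.rkSet (A:Set α))) *
      (∑ B ∈ (G' \ F).powerset,
        (-1:ℚ)^B.card * 2^(M.rkSet (G':Set α) - M.rkSet ((F ∪ B : Finset α) : Set α)))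
      = ∑ F ∈ mFl M G', ∑ F₁ ∈ mFl M G', ∑ F₂ ∈ mFl M G',
          if F₁ ⊆ F ∧ F ⊆ F₂ then
            (2^(M.rkSet (F₁:Set α)) * mw M G' F₁) *
            (2^(M.rkSet (G':Set α) - M.rkSet (F₂:Set α)) * mm M G' F F₂) else 0 := by
        refine Finset.sum_congr rfl fun F hF => ?_
        rw [stepX hG hfin hF, stepY hG hfin hF, Finset.sum_mul_sum]
        rw [Finset.sum_filter]
        refine Finset.sum_congr rfl fun F₁ _ => ?_
        rw [Finset.sum_filter]
        by_cases h1 : F₁ ⊆ F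
        · rw [if_pos h1]
          refine Finset.sum_congr rfl fun F₂ _ => ?_
          by_cases h2 : F ⊆ F₂
          · rw [if_pos h2, if_pos ⟨h1, h2⟩]
          · rw [if_neg h2, if_neg (fun hc => h2 hc.2)]
        · rw [if_neg h1, eq_comm]
          exact Finset.sum_eq_zero fun F₂ _ => if_neg (fun hc => h1 hc.1)
    _ = ∑ F₁ ∈ mFl M G', ∑ F₂ ∈ mFl M G', ∑ F ∈ mFl M G',
          if F₁ ⊆ F ∧ F ⊆ F₂ then
            (2^(M.rkSet (F₁:Set α)) * mw M G' F₁) *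
            (2^(M.rkSet (G':Set α) - M.rkSet (F₂:Set α)) * mm M G' F F₂) else 0 := by
        rw [Finset.sum_comm]
        refine Finset.sum_congr rfl fun F₁ _ => Finset.sum_comm
    _ = ∑ F₁ ∈ mFl M G', ∑ F₂ ∈ mFl M G',
          (2^(M.rkSet (F₁:Set α)) * mw M G' F₁) * (2^(M.rkSet (G':Set α) - M.rkSet (F₂:Set α)))
            * (if F₁ = F₂ then 1 else 0) := by
        refine Finset.sum_congr rfl fun F₁ hF₁ => Finset.sum_congr rfl fun F₂ hF₂ => ?_
        rw [← hδ F₁ hF₁ F₂ hF₂, Finset.sum_filter, Finset.mul_sum]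
        refine Finset.sum_congr rfl fun F _ => ?_
        by_cases h : F₁ ⊆ F ∧ F ⊆ F₂
        · rw [if_pos h, if_pos h]; ring
        · rw [if_neg h, if_neg h, mul_zero]
    _ = ∑ F₁ ∈ mFl M G',
          (2^(M.rkSet (F₁:Set α)) * mw M G' F₁) * (2^(M.rkSet (G':Set α) - M.rkSet (F₁:Set α))) := by
        refine Finset.sum_congr rfl fun F₁ hF₁ => ?_
        have hcg : ∀ F₂ ∈ mFl M G',
            (2^(M.rkSet (F₁:Set α)) * mw M G' F₁) * (2^(M.rkSet (G':Set α) - M.rkSet (F₂:Set α)))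
              * (if F₁ = F₂ then 1 else 0)
            = if F₁ = F₂ then (2^(M.rkSet (F₁:Set α)) * mw M G' F₁)
                * (2^(M.rkSet (G':Set α) - M.rkSet (F₂:Set α))) else 0 := by
          intro F₂ _
          rw [mul_ite, mul_one, mul_zero]
        rw [Finset.sum_congr rfl hcg, Finset.sum_ite_eq _ F₁ _, if_pos hF₁]
    _ = 2^(M.rkSet (G':Set α)) * ∑ F₁ ∈ mFl M G', mw M G' F₁ := by
        rw [Finset.mul_sum]
        refine Finset.sum_congr rfl fun F₁ hF₁ => ?_
        have hle : M.rkSet (F₁:Set α) ≤ M.rkSet (G':Set α) :=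
          Matroid.rkSet_mono hfin (Finset.coe_subset.mpr (mFl_subset hG hF₁))
        have hpow : (2:ℚ)^(M.rkSet (F₁:Set α)) * 2^(M.rkSet (G':Set α) - M.rkSet (F₁:Set α))
            = 2^(M.rkSet (G':Set α)) := by
          rw [← pow_add]
          congr 1
          omega
        rw [mul_comm (2^(M.rkSet (F₁:Set α))) (mw M G' F₁), mul_assoc, hpow, mul_comm]
    _ = 0 := by rw [stepW hG hfin hne, mul_zero]

end Assembly


/-- For a loopless matroid `M` of positive rank and every nonempty flat `G`,
`∑_{F flat, F ⊆ G} c_{M^F} · Eu_{(M^G)_F} = 0`, where `Eu_N = χ_N(2)` and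
`c_N = -2^(rk N) χ_N(1/2)`. -/
theorem c_eu_orthogonality (M : Matroid α) (hfin : M.E.Finite) (hl : M.IsLoopless)
    (hrk : 0 < M.rank) (G : Set α) (hG : M.IsFlat G) (hGne : G.Nonempty) :
    ∑ᶠ (F : Set α) (_ : M.IsFlat F ∧ F ⊆ G),
      (M ↾ F).cInv * ((M ↾ G).con F).charPoly 2 = 0 := by
  classical
  have hGE : G ⊆ M.E := hG.subset_ground
  have hGfin : G.Finite := hfin.subset hGE
  set G' : Finset α := hGfin.toFinset with hG'def
  have hG' : (G' : Set α) = G := hGfin.coe_toFinset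
  have hGflat' : M.IsFlat ((hGfin.toFinset : Finset α) : Set α) := by
    rw [hGfin.coe_toFinset]; exact hG
  have hconv2 : (∑ᶠ (F : Set α) (_ : M.IsFlat F ∧ F ⊆ G),
        (M ↾ F).cInv * ((M ↾ G).con F).charPoly 2)
      = ∑ A ∈ mFl M G', (M ↾ (A : Set α)).cInv * ((M ↾ G).con (A : Set α)).charPoly 2 := by
    rw [Matroid.finsum_cond_eq_sum G' (fun S => M.IsFlat S ∧ S ⊆ G)
      (fun F => (M ↾ F).cInv * ((M ↾ G).con F).charPoly 2)
      (fun S hS => by rw [hG']; exact hS.2)]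
    apply Finset.sum_congr
    · ext A
      simp only [Finset.mem_filter, Finset.mem_powerset, mFl]
      rw [hG']
    · intro A _
      rfl
  rw [hconv2]
  have hGflat : M.IsFlat (G' : Set α) := by rw [hG']; exact hG
  have hne : G' ≠ ∅ := by
    intro h
    rw [h, Finset.coe_empty] at hG'
    exact hGne.ne_empty hG'.symm
  have hterm : ∀ A ∈ mFl M G',
      (M ↾ (A : Set α)).cInv * ((M ↾ G).con (A : Set α)).charPoly 2
        = -((∑ A' ∈ A.powerset, (-1:ℚ)^A'.card * 2^(M.rkSet (A':Set α))) *
            (∑ B ∈ (G' \ A).powerset, (-1:ℚ)^B.card *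
              2^(M.rkSet (G':Set α) - M.rkSet ((A ∪ B : Finset α):Set α)))) := by
    intro A hA
    have hAG' : A ⊆ G' := mFl_subset hGflat hA
    have hAsub : (A : Set α) ⊆ G := by rw [← hG']; exact Finset.coe_subset.mpr hAG'
    rw [Matroid.cInv_restrict_eq hfin (hAsub.trans hGE) A rfl,
        Matroid.charPoly_con_eq hfin hGE hAsub G' A hG' rfl]
    simp only [← Finset.coe_union, ← hG']
    rw [neg_mul]
  rw [Finset.sum_congr rfl hterm, Finset.sum_neg_distrib,
    core_identity hGflat hfin hne, neg_zero]
end
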